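/- arXiv:1001.2851 — 4 statements merged into one kernel-verified Lean document; each statement's English description precedes it below -/
import Mathlib

section
/- For every g ∈ G and every σ-integrable function f on S, ∫_S f(g^{-1}(x)) dσ(x) = ∫_S f(y) · κ(g,y)^{n-1} dσ(y). -/
open MeasureTheory Matrix
open scoped ENNReal NNReal

noncomputable section

/-- The Lorentzian bilinear form `[x,y] = x₀y₀ − Σ_{i=1}^n x_i y_i` on `ℝ^{n+1}`. -/
def lform (n : ℕ) (x y : Fin (n+1) → ℝ) : ℝ :=
  x 0 * y 0 - ∑ i : Fin n, x i.succ * y i.succ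

/-- For `x ∈ S ⊂ ℝⁿ`, `x̃ = (1, x₁, …, x_n) ∈ ℝ^{n+1}`. -/
def tilde (n : ℕ) (x : EuclideanSpace ℝ (Fin n)) : Fin (n+1) → ℝ :=
  Fin.cons 1 (fun i => x i)

/-- Membership in `G = SO₀(1,n)`. -/
def IsLorentz (n : ℕ) (g : Matrix (Fin (n+1)) (Fin (n+1)) ℝ) : Prop :=
  (∀ x y : Fin (n+1) → ℝ, lform n (g.mulVec x) (g.mulVec y) = lform n x y)
    ∧ g.det = 1 ∧ 0 < g 0 0

/-- The conformal action of `G` on the sphere: `g(x)ᵢ = (g x̃)ᵢ / (g x̃)₀`. -/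
def sphAct (n : ℕ) (g : Matrix (Fin (n+1)) (Fin (n+1)) ℝ)
    (x : EuclideanSpace ℝ (Fin n)) : EuclideanSpace ℝ (Fin n) :=
  WithLp.toLp 2 (fun i : Fin n => g.mulVec (tilde n x) i.succ / g.mulVec (tilde n x) 0)

/-- The conformal factor `κ(g,x) = (g x̃)₀⁻¹`. -/
def kappa (n : ℕ) (g : Matrix (Fin (n+1)) (Fin (n+1)) ℝ)
    (x : EuclideanSpace ℝ (Fin n)) : ℝ :=
  (g.mulVec (tilde n x) 0)⁻¹

namespace Stmt6

variable {n : ℕ}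

def eta (n : ℕ) : Matrix (Fin (n+1)) (Fin (n+1)) ℝ :=
  Matrix.diagonal (fun i => if i = 0 then 1 else -1)

lemma lform_eq (x y : Fin (n+1) → ℝ) : lform n x y = x ⬝ᵥ (eta n).mulVec y := by
  have : x ⬝ᵥ (eta n).mulVec y = ∑ i, x i * ((if i = 0 then (1:ℝ) else -1) * y i) := by
    simp [dotProduct, eta, Matrix.mulVec_diagonal]
  rw [lform, this, Fin.sum_univ_succ]
  simp [Fin.succ_ne_zero, mul_neg, sub_eq_add_neg, Finset.sum_neg_distrib]

lemma eta_mul_eta : eta n * eta n = 1 := by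
  simp only [eta, Matrix.diagonal_mul_diagonal]
  convert Matrix.diagonal_one
  rename_i i
  by_cases h : i = 0 <;> simp [h]

lemma eta_transpose : (eta n)ᵀ = eta n := Matrix.diagonal_transpose _

lemma dot_ext {M N : Matrix (Fin (n+1)) (Fin (n+1)) ℝ}
    (h : ∀ x y, x ⬝ᵥ M.mulVec y = x ⬝ᵥ N.mulVec y) : M = N := by
  ext i j
  have := h (Pi.single i 1) (Pi.single j 1)
  rwa [Matrix.mulVec_single_one, Matrix.mulVec_single_one, single_dotProduct,
    single_dotProduct, one_mul, one_mul] at this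

lemma form_pres {g : Matrix (Fin (n+1)) (Fin (n+1)) ℝ}
    (hmat : gᵀ * (eta n * g) = eta n) (x y : Fin (n+1) → ℝ) :
    lform n (g.mulVec x) (g.mulVec y) = lform n x y := by
  have e : x ⬝ᵥ (gᵀ * (eta n * g)).mulVec y
      = (g.mulVec x) ⬝ᵥ (eta n).mulVec (g.mulVec y) := by
    calc x ⬝ᵥ (gᵀ * (eta n * g)).mulVec y
        = x ⬝ᵥ gᵀ.mulVec ((eta n).mulVec (g.mulVec y)) := by
          rw [Matrix.mulVec_mulVec, Matrix.mulVec_mulVec, Matrix.mul_assoc]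
      _ = (g.mulVec x) ⬝ᵥ ((eta n).mulVec (g.mulVec y)) := by
          rw [Matrix.dotProduct_mulVec, Matrix.vecMul_transpose]
  rw [lform_eq, lform_eq, ← e, hmat]

lemma lorentz_matrix {g : Matrix (Fin (n+1)) (Fin (n+1)) ℝ} (hg : IsLorentz n g) :
    gᵀ * (eta n * g) = eta n := by
  apply dot_ext
  intro x y
  have h := hg.1 x y
  rw [lform_eq, lform_eq] at h
  calc x ⬝ᵥ (gᵀ * (eta n * g)).mulVec y
      = x ⬝ᵥ gᵀ.mulVec ((eta n).mulVec (g.mulVec y)) := by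
        rw [Matrix.mulVec_mulVec, Matrix.mulVec_mulVec, Matrix.mul_assoc]
    _ = (g.mulVec x) ⬝ᵥ ((eta n).mulVec (g.mulVec y)) := by
        rw [Matrix.dotProduct_mulVec, Matrix.vecMul_transpose]
    _ = x ⬝ᵥ (eta n).mulVec y := h

lemma lorentz_isUnit_det {g : Matrix (Fin (n+1)) (Fin (n+1)) ℝ} (hg : IsLorentz n g) :
    IsUnit g.det := by rw [hg.2.1]; exact isUnit_one

lemma lorentz_inv_eq {g : Matrix (Fin (n+1)) (Fin (n+1)) ℝ} (hg : IsLorentz n g) :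
    g⁻¹ = eta n * gᵀ * eta n := by
  apply Matrix.inv_eq_left_inv
  calc eta n * gᵀ * eta n * g = eta n * (gᵀ * (eta n * g)) := by
        simp only [Matrix.mul_assoc]
    _ = 1 := by rw [lorentz_matrix hg, eta_mul_eta]

lemma lorentz_mul_eta {g : Matrix (Fin (n+1)) (Fin (n+1)) ℝ} (hg : IsLorentz n g) :
    g * (eta n * gᵀ) = eta n := by
  have h1 : g * (eta n * gᵀ * eta n) = 1 :=
    (lorentz_inv_eq hg) ▸ Matrix.mul_nonsing_inv g (lorentz_isUnit_det hg)
  calc g * (eta n * gᵀ) = g * (eta n * gᵀ * eta n) * eta n := by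
        simp only [Matrix.mul_assoc, eta_mul_eta, Matrix.mul_one]
    _ = eta n := by rw [h1, Matrix.one_mul]

lemma lorentz_inv {g : Matrix (Fin (n+1)) (Fin (n+1)) ℝ} (hg : IsLorentz n g) :
    IsLorentz n g⁻¹ := by
  have hdet : IsUnit g.det := lorentz_isUnit_det hg
  have hee : ∀ M : Matrix (Fin (n+1)) (Fin (n+1)) ℝ, eta n * (eta n * M) = M := by
    intro M; rw [← Matrix.mul_assoc, eta_mul_eta, Matrix.one_mul]
  have h2 : g * (eta n * (gᵀ * eta n)) = 1 := by
    rw [show eta n * (gᵀ * eta n) = (eta n * gᵀ) * eta n from (Matrix.mul_assoc _ _ _).symm,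
      ← Matrix.mul_assoc, lorentz_mul_eta hg, eta_mul_eta]
  have hmat : (g⁻¹)ᵀ * (eta n * g⁻¹) = eta n := by
    rw [lorentz_inv_eq hg]
    simp only [Matrix.transpose_mul, eta_transpose, Matrix.transpose_transpose,
      Matrix.mul_assoc]
    rw [hee, h2, Matrix.mul_one]
  refine ⟨form_pres hmat, ?_, ?_⟩
  · rw [Matrix.det_nonsing_inv, hg.2.1]; simp
  · rw [lorentz_inv_eq hg]
    have : (eta n * gᵀ * eta n) 0 0 = g 0 0 := by
      simp [eta, Matrix.diagonal_mul, Matrix.mul_diagonal]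
    rw [this]; exact hg.2.2

lemma mulVec_tilde (g : Matrix (Fin (n+1)) (Fin (n+1)) ℝ) (x : EuclideanSpace ℝ (Fin n))
    (i : Fin (n+1)) :
    g.mulVec (tilde n x) i = g i 0 + ∑ j : Fin n, g i j.succ * x j := by
  simp [Matrix.mulVec, dotProduct, tilde, Fin.sum_univ_succ]

lemma norm_sq_eq (x : EuclideanSpace ℝ (Fin n)) : ‖x‖^2 = ∑ i, x i ^ 2 := by
  rw [EuclideanSpace.norm_eq, Real.sq_sqrt (by positivity)]
  simp [Real.norm_eq_abs, sq_abs]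

lemma sum_sq_of_mem {x : EuclideanSpace ℝ (Fin n)}
    (hx : x ∈ Metric.sphere (0 : EuclideanSpace ℝ (Fin n)) 1) : ∑ i, x i ^ 2 = 1 := by
  rw [← norm_sq_eq, mem_sphere_zero_iff_norm.mp hx, one_pow]

lemma norm_sub_sq_eq (x y : EuclideanSpace ℝ (Fin n)) :
    ‖x - y‖^2 = ∑ i, (x i - y i) ^ 2 := by
  rw [norm_sq_eq]
  exact Finset.sum_congr rfl fun i _ => by rw [PiLp.sub_apply]

lemma lform_tilde (x y : EuclideanSpace ℝ (Fin n)) :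
    lform n (tilde n x) (tilde n y) = 1 - ∑ i, x i * y i := by
  simp [lform, tilde]

lemma row_sq {g : Matrix (Fin (n+1)) (Fin (n+1)) ℝ} (hg : IsLorentz n g) :
    ∑ j : Fin n, (g 0 j.succ)^2 = (g 0 0)^2 - 1 := by
  have h := congrFun (congrFun (lorentz_mul_eta hg) 0) 0
  rw [Matrix.mul_apply] at h
  have : ∀ k, (eta n * gᵀ) k 0 = (if k = 0 then (1:ℝ) else -1) * g 0 k := by
    intro k; simp [eta, Matrix.diagonal_mul, Matrix.transpose_apply]
  simp only [this] at h
  rw [Fin.sum_univ_succ] at h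
  simp only [if_pos rfl, Fin.succ_ne_zero, if_false, if_true, one_mul, neg_one_mul,
    mul_neg] at h
  have hsum : ∑ j : Fin n, (g 0 j.succ)^2 = ∑ j : Fin n, g 0 j.succ * g 0 j.succ :=
    Finset.sum_congr rfl fun j _ => pow_two _
  rw [hsum]
  have h2 : ∑ j : Fin n, -(g 0 j.succ * g 0 j.succ)
      = -∑ j : Fin n, g 0 j.succ * g 0 j.succ := by
    rw [← Finset.sum_neg_distrib]
  rw [h2] at h
  have he : eta n 0 0 = (1:ℝ) := by simp [eta]
  rw [he] at h
  have hg2 : g 0 0 ^2 = g 0 0 * g 0 0 := pow_two _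
  linarith

lemma kappa_denom_pos {g : Matrix (Fin (n+1)) (Fin (n+1)) ℝ} (hg : IsLorentz n g)
    {x : EuclideanSpace ℝ (Fin n)} (hx : x ∈ Metric.sphere (0 : EuclideanSpace ℝ (Fin n)) 1) :
    0 < g.mulVec (tilde n x) 0 := by
  rw [mulVec_tilde]
  set a := g 0 0 with ha
  set s := ∑ j : Fin n, g 0 j.succ * x j with hs
  have hcs : s^2 ≤ (∑ j : Fin n, (g 0 j.succ)^2) * ∑ j : Fin n, (x j)^2 :=
    Finset.sum_mul_sq_le_sq_mul_sq _ _ _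
  rw [sum_sq_of_mem hx, mul_one, row_sq hg] at hcs
  have hapos : 0 < a := hg.2.2
  nlinarith [hcs, hapos]

lemma kappa_pos {g : Matrix (Fin (n+1)) (Fin (n+1)) ℝ} (hg : IsLorentz n g)
    {x : EuclideanSpace ℝ (Fin n)} (hx : x ∈ Metric.sphere (0 : EuclideanSpace ℝ (Fin n)) 1) :
    0 < kappa n g x := inv_pos.mpr (kappa_denom_pos hg hx)

lemma lform_P {g : Matrix (Fin (n+1)) (Fin (n+1)) ℝ} (hg : IsLorentz n g)
    (x y : EuclideanSpace ℝ (Fin n)) :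
    g.mulVec (tilde n x) 0 * g.mulVec (tilde n y) 0
      - ∑ i : Fin n, g.mulVec (tilde n x) i.succ * g.mulVec (tilde n y) i.succ
      = 1 - ∑ i, x i * y i := by
  have h := hg.1 (tilde n x) (tilde n y)
  rw [lform_tilde] at h
  exact h

lemma sum_succ_sq {g : Matrix (Fin (n+1)) (Fin (n+1)) ℝ} (hg : IsLorentz n g)
    {x : EuclideanSpace ℝ (Fin n)} (hx : x ∈ Metric.sphere (0 : EuclideanSpace ℝ (Fin n)) 1) :
    ∑ i : Fin n, (g.mulVec (tilde n x) i.succ)^2 = (g.mulVec (tilde n x) 0)^2 := by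
  have h := lform_P hg x x
  have h2 : ∑ i, x i * x i = 1 := by
    rw [Finset.sum_congr rfl fun i _ => (pow_two (x i)).symm]
    exact sum_sq_of_mem hx
  rw [h2] at h
  have h3 : ∑ i : Fin n, (g.mulVec (tilde n x) i.succ)^2
      = ∑ i : Fin n, g.mulVec (tilde n x) i.succ * g.mulVec (tilde n x) i.succ :=
    Finset.sum_congr rfl fun i _ => pow_two _
  rw [h3]; nlinarith [h]

lemma sphAct_mem {g : Matrix (Fin (n+1)) (Fin (n+1)) ℝ} (hg : IsLorentz n g)
    {x : EuclideanSpace ℝ (Fin n)} (hx : x ∈ Metric.sphere (0 : EuclideanSpace ℝ (Fin n)) 1) :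
    sphAct n g x ∈ Metric.sphere (0 : EuclideanSpace ℝ (Fin n)) 1 := by
  rw [mem_sphere_zero_iff_norm]
  have h0 := kappa_denom_pos hg hx
  have hsum : ∑ i, (sphAct n g x i)^2 = 1 := by
    simp only [sphAct, PiLp.toLp_apply, div_pow]
    rw [← Finset.sum_div, sum_succ_sq hg hx, div_self (by positivity)]
  have hn : ‖sphAct n g x‖^2 = 1 := by rw [norm_sq_eq]; exact hsum
  nlinarith [norm_nonneg (sphAct n g x)]

lemma dist_sq_formula {g : Matrix (Fin (n+1)) (Fin (n+1)) ℝ} (hg : IsLorentz n g)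
    {x y : EuclideanSpace ℝ (Fin n)}
    (hx : x ∈ Metric.sphere (0 : EuclideanSpace ℝ (Fin n)) 1)
    (hy : y ∈ Metric.sphere (0 : EuclideanSpace ℝ (Fin n)) 1) :
    ‖sphAct n g x - sphAct n g y‖^2 = kappa n g x * kappa n g y * ‖x - y‖^2 := by
  have hp := kappa_denom_pos hg hx
  have hq := kappa_denom_pos hg hy
  set P := g.mulVec (tilde n x) with hP
  set Q := g.mulVec (tilde n y) with hQ
  have hsx := sum_succ_sq hg hx
  have hsy := sum_succ_sq hg hy
  have hl := lform_P hg x y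
  have hxy : ‖x - y‖^2 = 2 - 2 * ∑ i, x i * y i := by
    rw [norm_sub_sq_eq]
    have : ∀ i : Fin n, (x i - y i)^2 = x i ^2 - 2*(x i * y i) + y i^2 := fun i => by ring
    rw [Finset.sum_congr rfl fun i _ => this i, Finset.sum_add_distrib,
      Finset.sum_sub_distrib, sum_sq_of_mem hx, sum_sq_of_mem hy, ← Finset.mul_sum]
    ring
  have hL : ‖sphAct n g x - sphAct n g y‖^2
      = 2 - 2 * ((P 0 * Q 0)⁻¹ * ∑ i : Fin n, P i.succ * Q i.succ) := by
    rw [norm_sub_sq_eq]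
    have : ∀ i : Fin n, (sphAct n g x i - sphAct n g y i)^2
        = (P i.succ)^2 * ((P 0)^2)⁻¹ - 2 * ((P 0 * Q 0)⁻¹ * (P i.succ * Q i.succ))
          + (Q i.succ)^2 * ((Q 0)^2)⁻¹ := by
      intro i
      simp only [sphAct, PiLp.toLp_apply, ← hP, ← hQ]
      field_simp
      ring
    rw [Finset.sum_congr rfl fun i _ => this i, Finset.sum_add_distrib,
      Finset.sum_sub_distrib, ← Finset.sum_mul, ← Finset.sum_mul, hsx, hsy,
      mul_inv_cancel₀ (by positivity), mul_inv_cancel₀ (by positivity), ← Finset.mul_sum,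
      ← Finset.mul_sum]
    ring
  rw [hL, hxy, kappa, kappa, ← hP, ← hQ]
  have hc : ∑ i : Fin n, P i.succ * Q i.succ = P 0 * Q 0 - (1 - ∑ i, x i * y i) := by
    linarith [hl]
  rw [hc]
  field_simp
  ring

lemma tilde_sphAct {g : Matrix (Fin (n+1)) (Fin (n+1)) ℝ} (hg : IsLorentz n g)
    {x : EuclideanSpace ℝ (Fin n)} (hx : x ∈ Metric.sphere (0 : EuclideanSpace ℝ (Fin n)) 1) :
    tilde n (sphAct n g x) = kappa n g x • g.mulVec (tilde n x) := by
  have h0 := (kappa_denom_pos hg hx).ne'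
  funext i
  refine Fin.cases ?_ ?_ i
  · simp only [tilde, Fin.cons_zero, Pi.smul_apply, smul_eq_mul, kappa]
    exact (inv_mul_cancel₀ h0).symm
  · intro j
    simp only [tilde, Fin.cons_succ, Pi.smul_apply, smul_eq_mul, kappa, sphAct, PiLp.toLp_apply]
    rw [div_eq_inv_mul]

lemma mulVec_inv_mulVec {g : Matrix (Fin (n+1)) (Fin (n+1)) ℝ} (hg : IsLorentz n g)
    (v : Fin (n+1) → ℝ) : g⁻¹.mulVec (g.mulVec v) = v := by
  rw [Matrix.mulVec_mulVec, Matrix.nonsing_inv_mul g (lorentz_isUnit_det hg), Matrix.one_mulVec]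

lemma P_inv_sphAct {g : Matrix (Fin (n+1)) (Fin (n+1)) ℝ} (hg : IsLorentz n g)
    {x : EuclideanSpace ℝ (Fin n)} (hx : x ∈ Metric.sphere (0 : EuclideanSpace ℝ (Fin n)) 1) :
    g⁻¹.mulVec (tilde n (sphAct n g x)) = kappa n g x • tilde n x := by
  rw [tilde_sphAct hg hx, Matrix.mulVec_smul, mulVec_inv_mulVec hg]

lemma kappa_inv_sphAct {g : Matrix (Fin (n+1)) (Fin (n+1)) ℝ} (hg : IsLorentz n g)
    {x : EuclideanSpace ℝ (Fin n)} (hx : x ∈ Metric.sphere (0 : EuclideanSpace ℝ (Fin n)) 1) :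
    kappa n g⁻¹ (sphAct n g x) = (kappa n g x)⁻¹ := by
  rw [kappa, P_inv_sphAct hg hx]
  simp [tilde]

lemma sphAct_inv_sphAct {g : Matrix (Fin (n+1)) (Fin (n+1)) ℝ} (hg : IsLorentz n g)
    {x : EuclideanSpace ℝ (Fin n)} (hx : x ∈ Metric.sphere (0 : EuclideanSpace ℝ (Fin n)) 1) :
    sphAct n g⁻¹ (sphAct n g x) = x := by
  have hk := (kappa_pos hg hx).ne'
  ext i
  show (g⁻¹.mulVec (tilde n (sphAct n g x))) i.succ / (g⁻¹.mulVec (tilde n (sphAct n g x))) 0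
      = x i
  rw [P_inv_sphAct hg hx]
  simp only [Pi.smul_apply, smul_eq_mul, tilde, Fin.cons_succ, Fin.cons_zero, mul_one]
  rw [mul_comm, mul_div_assoc, div_self hk, mul_one]

lemma sphAct_sphAct_inv {g : Matrix (Fin (n+1)) (Fin (n+1)) ℝ} (hg : IsLorentz n g)
    {x : EuclideanSpace ℝ (Fin n)} (hx : x ∈ Metric.sphere (0 : EuclideanSpace ℝ (Fin n)) 1) :
    sphAct n g (sphAct n g⁻¹ x) = x := by
  have := sphAct_inv_sphAct (lorentz_inv hg) hx
  rwa [Matrix.nonsing_inv_nonsing_inv g (lorentz_isUnit_det hg)] at this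

lemma dist_act_le {g : Matrix (Fin (n+1)) (Fin (n+1)) ℝ} (hg : IsLorentz n g)
    {x y : EuclideanSpace ℝ (Fin n)}
    (hx : x ∈ Metric.sphere (0 : EuclideanSpace ℝ (Fin n)) 1)
    (hy : y ∈ Metric.sphere (0 : EuclideanSpace ℝ (Fin n)) 1)
    {b : ℝ} (hb : 0 ≤ b) (hbx : kappa n g x ≤ b) (hby : kappa n g y ≤ b) :
    dist (sphAct n g x) (sphAct n g y) ≤ b * dist x y := by
  have h := dist_sq_formula hg hx hy
  rw [dist_eq_norm, dist_eq_norm]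
  have hkx := kappa_pos hg hx
  have hky := kappa_pos hg hy
  have hsq : ‖sphAct n g x - sphAct n g y‖^2 ≤ (b * ‖x - y‖)^2 := by
    rw [h, mul_pow]
    have h1 : kappa n g x * kappa n g y ≤ b^2 := by nlinarith
    nlinarith [sq_nonneg ‖x - y‖, norm_nonneg (x - y)]
  have hbd : 0 ≤ b * ‖x - y‖ := mul_nonneg hb (norm_nonneg _)
  nlinarith [norm_nonneg (sphAct n g x - sphAct n g y), hsq, hbd]

lemma dist_act_ge {g : Matrix (Fin (n+1)) (Fin (n+1)) ℝ} (hg : IsLorentz n g)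
    {x y : EuclideanSpace ℝ (Fin n)}
    (hx : x ∈ Metric.sphere (0 : EuclideanSpace ℝ (Fin n)) 1)
    (hy : y ∈ Metric.sphere (0 : EuclideanSpace ℝ (Fin n)) 1)
    {a : ℝ} (ha : 0 ≤ a) (hax : a ≤ kappa n g x) (hay : a ≤ kappa n g y) :
    a * dist x y ≤ dist (sphAct n g x) (sphAct n g y) := by
  have h := dist_sq_formula hg hx hy
  rw [dist_eq_norm, dist_eq_norm]
  have hkx := kappa_pos hg hx
  have hky := kappa_pos hg hy
  have hsq : (a * ‖x - y‖)^2 ≤ ‖sphAct n g x - sphAct n g y‖^2 := by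
    rw [h, mul_pow]
    have h1 : a^2 ≤ kappa n g x * kappa n g y := by nlinarith
    nlinarith [sq_nonneg ‖x - y‖]
  have hbd : 0 ≤ a * ‖x - y‖ := mul_nonneg ha (norm_nonneg _)
  nlinarith [norm_nonneg (sphAct n g x - sphAct n g y), hsq, hbd]

lemma continuous_P (g : Matrix (Fin (n+1)) (Fin (n+1)) ℝ) (i : Fin (n+1)) :
    Continuous (fun x : EuclideanSpace ℝ (Fin n) => g.mulVec (tilde n x) i) := by
  simp only [mulVec_tilde]
  refine continuous_const.add (continuous_finset_sum _ fun j _ => ?_)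
  exact continuous_const.mul (PiLp.proj (𝕜 := ℝ) (p := 2) (β := fun _ : Fin n => ℝ) j).continuous

lemma measurable_sphAct (g : Matrix (Fin (n+1)) (Fin (n+1)) ℝ) :
    Measurable (sphAct n g) := by
  have : sphAct n g = (MeasurableEquiv.toLp 2 (Fin n → ℝ)) ∘
      (fun x : EuclideanSpace ℝ (Fin n) => fun i : Fin n =>
        g.mulVec (tilde n x) i.succ / g.mulVec (tilde n x) 0) := rfl
  rw [this]
  refine (MeasurableEquiv.measurable _).comp (measurable_pi_lambda _ fun i => ?_)
  exact ((continuous_P g i.succ).measurable).div ((continuous_P g 0).measurable)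

lemma measurable_kappa (g : Matrix (Fin (n+1)) (Fin (n+1)) ℝ) :
    Measurable (kappa n g) := ((continuous_P g 0).measurable).inv

lemma continuousOn_kappa {g : Matrix (Fin (n+1)) (Fin (n+1)) ℝ} (hg : IsLorentz n g) :
    ContinuousOn (kappa n g) (Metric.sphere (0 : EuclideanSpace ℝ (Fin n)) 1) :=
  ((continuous_P g 0).continuousOn).inv₀ fun x hx => (kappa_denom_pos hg hx).ne'

/-! ### Measure-theoretic core -/

lemma le_of_forall_ofReal_rpow_mul {L I : ℝ≥0∞} {d : ℝ}
    (h : ∀ t : ℝ, 1 < t → L ≤ ENNReal.ofReal t ^ d * I) : L ≤ I := by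
  have h1 : Filter.Tendsto (fun j : ℕ => (1 + 1/((j:ℝ)+1))) Filter.atTop (nhds 1) := by
    have := tendsto_one_div_add_atTop_nhds_zero_nat (𝕜 := ℝ)
    have h2 := this.const_add (1:ℝ)
    simpa using h2
  have h2 : Filter.Tendsto (fun j : ℕ => ENNReal.ofReal (1 + 1/((j:ℝ)+1)) ^ d * I)
      Filter.atTop (nhds I) := by
    have h3 : Filter.Tendsto (fun j : ℕ => ENNReal.ofReal (1 + 1/((j:ℝ)+1)) ^ d)
        Filter.atTop (nhds 1) := by
      have h4 := (ENNReal.continuous_rpow_const (y := d)).continuousAt (x := (1 : ℝ≥0∞))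
      have h5 := (ENNReal.continuous_ofReal.tendsto 1).comp h1
      have h6 := (h4.tendsto.comp (by simpa using h5))
      simpa [ENNReal.one_rpow, Function.comp_def] using h6
    have h7 := ENNReal.Tendsto.mul_const (b := I) h3 (Or.inl one_ne_zero)
    simpa using h7
  refine ge_of_tendsto' h2 fun j => h _ ?_
  have : (0:ℝ) < 1/((j:ℝ)+1) := by positivity
  linarith

variable {g : Matrix (Fin (n+1)) (Fin (n+1)) ℝ}

lemma injOn_sphAct (hg : IsLorentz n g) :
    Set.InjOn (sphAct n g) (Metric.sphere (0 : EuclideanSpace ℝ (Fin n)) 1) := by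
  intro x hx y hy hxy
  have := congrArg (sphAct n g⁻¹) hxy
  rwa [sphAct_inv_sphAct hg hx, sphAct_inv_sphAct hg hy] at this

lemma image_eq_inter (hg : IsLorentz n g) {A : Set (EuclideanSpace ℝ (Fin n))}
    (hAS : A ⊆ Metric.sphere (0 : EuclideanSpace ℝ (Fin n)) 1) :
    sphAct n g '' A = Metric.sphere (0 : EuclideanSpace ℝ (Fin n)) 1 ∩ sphAct n g⁻¹ ⁻¹' A := by
  ext y
  constructor
  · rintro ⟨x, hxA, rfl⟩
    exact ⟨sphAct_mem hg (hAS hxA), by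
      rw [Set.mem_preimage, sphAct_inv_sphAct hg (hAS hxA)]; exact hxA⟩
  · rintro ⟨hyS, hyA⟩
    exact ⟨sphAct n g⁻¹ y, hyA, sphAct_sphAct_inv hg hyS⟩

lemma measurableSet_image (hg : IsLorentz n g) {A : Set (EuclideanSpace ℝ (Fin n))}
    (hA : MeasurableSet A)
    (hAS : A ⊆ Metric.sphere (0 : EuclideanSpace ℝ (Fin n)) 1) :
    MeasurableSet (sphAct n g '' A) := by
  rw [image_eq_inter hg hAS]
  exact (Metric.isClosed_sphere.measurableSet).inter ((measurable_sphAct g⁻¹) hA)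

lemma sphere_nonempty' (hn : 1 ≤ n) :
    (Metric.sphere (0 : EuclideanSpace ℝ (Fin n)) 1).Nonempty := by
  refine ⟨EuclideanSpace.single (⟨0, hn⟩ : Fin n) 1, ?_⟩
  rw [mem_sphere_zero_iff_norm, EuclideanSpace.norm_single, norm_one]

/-- The two-sided bound at scale `t`. -/
lemma key_bounds (hn : 1 ≤ n) (hg : IsLorentz n g) {A : Set (EuclideanSpace ℝ (Fin n))}
    (hA : MeasurableSet A)
    (hAS : A ⊆ Metric.sphere (0 : EuclideanSpace ℝ (Fin n)) 1) {t : ℝ} (ht : 1 < t) :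
    μH[(n:ℝ)-1] (sphAct n g '' A)
        ≤ ENNReal.ofReal t ^ ((n:ℝ)-1) *
          ∫⁻ x in A, ENNReal.ofReal (kappa n g x) ^ ((n:ℝ)-1) ∂(μH[(n:ℝ)-1] : Measure (EuclideanSpace ℝ (Fin n)))
      ∧ (∫⁻ x in A, ENNReal.ofReal (kappa n g x) ^ ((n:ℝ)-1) ∂(μH[(n:ℝ)-1] : Measure (EuclideanSpace ℝ (Fin n))))
        ≤ ENNReal.ofReal t ^ ((n:ℝ)-1) * μH[(n:ℝ)-1] (sphAct n g '' A) := by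
  classical
  set S := Metric.sphere (0 : EuclideanSpace ℝ (Fin n)) 1 with hS
  set d : ℝ := (n:ℝ) - 1 with hd'
  have hd : (0:ℝ) ≤ d := by
    have : (1:ℝ) ≤ (n:ℝ) := by exact_mod_cast hn
    simp [hd']; linarith
  have ht0 : (0:ℝ) < t := lt_trans one_pos ht
  -- min and max of kappa on the sphere
  obtain ⟨z, hzS, hz⟩ := (isCompact_sphere (0 : EuclideanSpace ℝ (Fin n)) 1).exists_isMinOn
    (sphere_nonempty' hn) (continuousOn_kappa hg)
  obtain ⟨w, hwS, hw⟩ := (isCompact_sphere (0 : EuclideanSpace ℝ (Fin n)) 1).exists_isMaxOn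
    (sphere_nonempty' hn) (continuousOn_kappa hg)
  set c : ℝ := kappa n g z with hc'
  set C : ℝ := kappa n g w with hC'
  have hc : 0 < c := kappa_pos hg hzS
  have hcle : ∀ x ∈ S, c ≤ kappa n g x := fun x hx => hz hx
  have hCge : ∀ x ∈ S, kappa n g x ≤ C := fun x hx => hw hx
  -- choose m with C < c * t ^ m
  obtain ⟨m', hm'⟩ := pow_unbounded_of_one_lt (C / c) ht
  set m : ℕ := m' + 1 with hm''
  have hm : C < c * t ^ m := by
    have h1 : C / c < t ^ m' := hm'
    have h2 : (t:ℝ) ^ m' ≤ t ^ m := pow_le_pow_right₀ (le_of_lt ht) (by omega)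
    calc C = (C / c) * c := by field_simp
      _ < t ^ m' * c := by exact mul_lt_mul_of_pos_right h1 hc
      _ ≤ t ^ m * c := mul_le_mul_of_nonneg_right h2 (le_of_lt hc)
      _ = c * t ^ m := mul_comm _ _
  -- the layers
  set Ek : ℕ → Set (EuclideanSpace ℝ (Fin n)) :=
    fun k => S ∩ kappa n g ⁻¹' (Set.Ico (c * t ^ k) (c * t ^ (k+1))) with hEk'
  have hEk_meas : ∀ k, MeasurableSet (Ek k) := fun k =>
    (Metric.isClosed_sphere.measurableSet).inter ((measurable_kappa g) measurableSet_Ico)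
  have hEk_disj : Set.PairwiseDisjoint (↑(Finset.range m)) (fun k => A ∩ Ek k) := by
    intro k _ l _ hkl
    refine Set.disjoint_left.mpr ?_
    rintro x ⟨-, -, hk1, hk2⟩ ⟨-, -, hl1, hl2⟩
    rcases lt_or_gt_of_ne hkl with h | h
    · have : c * t ^ (k+1) ≤ c * t ^ l :=
        mul_le_mul_of_nonneg_left (pow_le_pow_right₀ (le_of_lt ht) h) (le_of_lt hc)
      linarith
    · have : c * t ^ (l+1) ≤ c * t ^ k :=
        mul_le_mul_of_nonneg_left (pow_le_pow_right₀ (le_of_lt ht) h) (le_of_lt hc)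
      linarith
  have hcover : A = ⋃ k ∈ Finset.range m, A ∩ Ek k := by
    ext x
    simp only [Set.mem_iUnion, Finset.mem_range, Set.mem_inter_iff, exists_and_left]
    constructor
    · intro hxA
      refine ⟨hxA, ?_⟩
      have hxS := hAS hxA
      have hex : ∃ k, kappa n g x < c * t ^ (k+1) := by
        refine ⟨m, lt_of_le_of_lt (hCge x hxS) (lt_of_lt_of_le hm ?_)⟩
        exact mul_le_mul_of_nonneg_left (pow_le_pow_right₀ (le_of_lt ht) (by omega)) (le_of_lt hc)
      have hk1 : kappa n g x < c * t ^ (Nat.find hex + 1) := Nat.find_spec hex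
      have hk2 : c * t ^ (Nat.find hex) ≤ kappa n g x := by
        rcases Nat.eq_zero_or_pos (Nat.find hex) with h0 | h0
        · rw [h0, pow_zero, mul_one]; exact hcle x hxS
        · have hlt : Nat.find hex - 1 < Nat.find hex := by omega
          have hmin := Nat.find_min hex hlt
          have heq : (Nat.find hex - 1) + 1 = Nat.find hex := by omega
          rw [heq] at hmin
          linarith [not_lt.mp hmin]
      have hkm : Nat.find hex < m := by
        have hxm : kappa n g x < c * t ^ ((m-1)+1) := by
          rw [show (m-1)+1 = m by omega]
          exact lt_of_le_of_lt (hCge x hxS) hm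
        have h9 := Nat.find_min' hex hxm
        omega
      exact ⟨Nat.find hex, hkm, hxS, hk2, hk1⟩
    · rintro ⟨hxA, -⟩; exact hxA
  -- Lipschitz bounds on each layer
  have hupk : ∀ k, μH[d] (sphAct n g '' (A ∩ Ek k))
      ≤ ENNReal.ofReal (c * t ^ (k+1)) ^ d * μH[d] (A ∩ Ek k) := by
    intro k
    have hpos : (0:ℝ) ≤ c * t ^ (k+1) := by positivity
    have hlip : LipschitzOnWith (Real.toNNReal (c * t ^ (k+1))) (sphAct n g) (A ∩ Ek k) := by
      rw [lipschitzOnWith_iff_dist_le_mul]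
      intro x hx y hy
      have hxS : x ∈ S := (hx.2).1
      have hyS : y ∈ S := (hy.2).1
      rw [Real.coe_toNNReal _ hpos]
      exact dist_act_le hg hxS hyS hpos (le_of_lt hx.2.2.2) (le_of_lt hy.2.2.2)
    have := hlip.hausdorffMeasure_image_le hd
    rwa [show ((Real.toNNReal (c * t ^ (k+1)) : ℝ≥0) : ℝ≥0∞) = ENNReal.ofReal (c * t ^ (k+1))
      from rfl] at this
  have hdnk : ∀ k, μH[d] (A ∩ Ek k)
      ≤ ENNReal.ofReal ((c * t ^ k)⁻¹) ^ d * μH[d] (sphAct n g '' (A ∩ Ek k)) := by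
    intro k
    have hpos : (0:ℝ) < c * t ^ k := by positivity
    have hinvpos : (0:ℝ) ≤ (c * t ^ k)⁻¹ := by positivity
    have hid : sphAct n g⁻¹ '' (sphAct n g '' (A ∩ Ek k)) = A ∩ Ek k := by
      rw [← Set.image_comp]
      apply Set.EqOn.image_eq_self
      intro x hx
      exact sphAct_inv_sphAct hg hx.2.1
    have hlip : LipschitzOnWith (Real.toNNReal ((c * t ^ k)⁻¹)) (sphAct n g⁻¹)
        (sphAct n g '' (A ∩ Ek k)) := by
      rw [lipschitzOnWith_iff_dist_le_mul]
      rintro u ⟨x, hx, rfl⟩ v ⟨y, hy, rfl⟩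
      have hxS : x ∈ S := hx.2.1
      have hyS : y ∈ S := hy.2.1
      rw [Real.coe_toNNReal _ hinvpos, sphAct_inv_sphAct hg hxS, sphAct_inv_sphAct hg hyS]
      have hge := dist_act_ge hg hxS hyS (le_of_lt hpos) hx.2.2.1 hy.2.2.1
      calc dist x y = (c * t ^ k)⁻¹ * ((c * t ^ k) * dist x y) := by field_simp
        _ ≤ (c * t ^ k)⁻¹ * dist (sphAct n g x) (sphAct n g y) :=
            mul_le_mul_of_nonneg_left hge hinvpos
    have := hlip.hausdorffMeasure_image_le hd
    rw [hid] at this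
    rwa [show ((Real.toNNReal ((c * t ^ k)⁻¹) : ℝ≥0) : ℝ≥0∞) = ENNReal.ofReal ((c * t ^ k)⁻¹)
      from rfl] at this
  -- integral bounds on each layer
  have hil : ∀ k, ENNReal.ofReal (c * t ^ k) ^ d * μH[d] (A ∩ Ek k)
      ≤ ∫⁻ x in A ∩ Ek k, ENNReal.ofReal (kappa n g x) ^ d ∂(μH[d] : Measure (EuclideanSpace ℝ (Fin n))) := by
    intro k
    rw [← setLIntegral_const (A ∩ Ek k) _]
    refine setLIntegral_mono' ((hA.inter (hEk_meas k))) fun x hx => ?_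
    exact ENNReal.rpow_le_rpow (ENNReal.ofReal_le_ofReal hx.2.2.1) hd
  have hih : ∀ k, (∫⁻ x in A ∩ Ek k, ENNReal.ofReal (kappa n g x) ^ d ∂(μH[d] : Measure (EuclideanSpace ℝ (Fin n))))
      ≤ ENNReal.ofReal (c * t ^ (k+1)) ^ d * μH[d] (A ∩ Ek k) := by
    intro k
    rw [← setLIntegral_const (A ∩ Ek k) _]
    refine setLIntegral_mono' ((hA.inter (hEk_meas k))) fun x hx => ?_
    exact ENNReal.rpow_le_rpow (ENNReal.ofReal_le_ofReal (le_of_lt hx.2.2.2)) hd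
  -- additivity
  have hsum_meas : μH[d] (sphAct n g '' A)
      = ∑ k ∈ Finset.range m, μH[d] (sphAct n g '' (A ∩ Ek k)) := by
    have himg : sphAct n g '' A = ⋃ k ∈ Finset.range m, sphAct n g '' (A ∩ Ek k) := by
      conv_lhs => rw [hcover]
      rw [Set.image_iUnion₂]
    rw [himg]
    refine measure_biUnion_finset ?_ fun k _ =>
      measurableSet_image hg (hA.inter (hEk_meas k)) fun x hx => hx.2.1
    intro k hk l hl hkl
    have := hEk_disj hk hl hkl
    refine Set.disjoint_left.mpr ?_
    rintro u ⟨x, hx, rfl⟩ ⟨y, hy, hyy⟩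
    have hxy : x = y := by
      have := injOn_sphAct hg hy.2.1 hx.2.1 hyy
      exact this.symm
    rw [← hxy] at hy
    exact Set.disjoint_left.mp this hx hy
  have hsum_int : (∫⁻ x in A, ENNReal.ofReal (kappa n g x) ^ d ∂(μH[d] : Measure (EuclideanSpace ℝ (Fin n))))
      = ∑ k ∈ Finset.range m, ∫⁻ x in A ∩ Ek k, ENNReal.ofReal (kappa n g x) ^ d ∂(μH[d] : Measure (EuclideanSpace ℝ (Fin n))) := by
    conv_lhs => rw [hcover]
    exact lintegral_biUnion_finset hEk_disj (fun k _ => hA.inter (hEk_meas k)) _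
  -- coefficient identities
  have hcoef : ∀ k, ENNReal.ofReal (c * t ^ (k+1)) ^ d
      = ENNReal.ofReal t ^ d * ENNReal.ofReal (c * t ^ k) ^ d := by
    intro k
    rw [← ENNReal.mul_rpow_of_nonneg _ _ hd, ← ENNReal.ofReal_mul (le_of_lt ht0)]
    congr 2
    ring
  have hcancel : ∀ k, ENNReal.ofReal (c * t ^ k) ^ d * ENNReal.ofReal ((c * t ^ k)⁻¹) ^ d = 1 := by
    intro k
    have hpos : (0:ℝ) < c * t ^ k := by positivity
    rw [← ENNReal.mul_rpow_of_nonneg _ _ hd, ← ENNReal.ofReal_mul (le_of_lt hpos),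
      mul_inv_cancel₀ (ne_of_gt hpos), ENNReal.ofReal_one, ENNReal.one_rpow]
  constructor
  · -- upper bound
    rw [hsum_meas, hsum_int, Finset.mul_sum]
    refine Finset.sum_le_sum fun k _ => ?_
    calc μH[d] (sphAct n g '' (A ∩ Ek k))
        ≤ ENNReal.ofReal (c * t ^ (k+1)) ^ d * μH[d] (A ∩ Ek k) := hupk k
      _ = ENNReal.ofReal t ^ d * (ENNReal.ofReal (c * t ^ k) ^ d * μH[d] (A ∩ Ek k)) := by
          rw [hcoef k, mul_assoc]
      _ ≤ ENNReal.ofReal t ^ d * ∫⁻ x in A ∩ Ek k, ENNReal.ofReal (kappa n g x) ^ d ∂(μH[d] : Measure (EuclideanSpace ℝ (Fin n))) :=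
          mul_le_mul_right (hil k) _
  · -- lower bound
    rw [hsum_meas, hsum_int, Finset.mul_sum]
    refine Finset.sum_le_sum fun k _ => ?_
    calc (∫⁻ x in A ∩ Ek k, ENNReal.ofReal (kappa n g x) ^ d ∂(μH[d] : Measure (EuclideanSpace ℝ (Fin n))))
        ≤ ENNReal.ofReal (c * t ^ (k+1)) ^ d * μH[d] (A ∩ Ek k) := hih k
      _ ≤ ENNReal.ofReal (c * t ^ (k+1)) ^ d *
          (ENNReal.ofReal ((c * t ^ k)⁻¹) ^ d * μH[d] (sphAct n g '' (A ∩ Ek k))) :=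
          mul_le_mul_right (hdnk k) _
      _ = ENNReal.ofReal t ^ d * μH[d] (sphAct n g '' (A ∩ Ek k)) := by
          rw [hcoef k, mul_assoc, ← mul_assoc (ENNReal.ofReal (c * t ^ k) ^ d), hcancel k, one_mul]

theorem image_measure_eq (hn : 1 ≤ n) (hg : IsLorentz n g)
    {A : Set (EuclideanSpace ℝ (Fin n))} (hA : MeasurableSet A)
    (hAS : A ⊆ Metric.sphere (0 : EuclideanSpace ℝ (Fin n)) 1) :
    μH[(n:ℝ)-1] (sphAct n g '' A)
      = ∫⁻ x in A, ENNReal.ofReal (kappa n g x) ^ ((n:ℝ)-1) ∂(μH[(n:ℝ)-1] : Measure (EuclideanSpace ℝ (Fin n))) := by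
  refine le_antisymm ?_ ?_
  · exact le_of_forall_ofReal_rpow_mul fun t ht => (key_bounds hn hg hA hAS ht).1
  · exact le_of_forall_ofReal_rpow_mul fun t ht => (key_bounds hn hg hA hAS ht).2

lemma map_eq (hn : 1 ≤ n) (hg : IsLorentz n g) :
    Measure.map (sphAct n g⁻¹)
        ((μH[(n:ℝ)-1] : Measure (EuclideanSpace ℝ (Fin n))).restrict
          (Metric.sphere (0 : EuclideanSpace ℝ (Fin n)) 1))
      = (((μH[(n:ℝ)-1] : Measure (EuclideanSpace ℝ (Fin n))).restrict
          (Metric.sphere (0 : EuclideanSpace ℝ (Fin n)) 1)).withDensity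
          (fun x => ENNReal.ofReal (kappa n g x) ^ ((n:ℝ)-1))) := by
  have hSmeas : MeasurableSet (Metric.sphere (0 : EuclideanSpace ℝ (Fin n)) 1) :=
    Metric.isClosed_sphere.measurableSet
  refine Measure.ext fun A hA => ?_
  rw [Measure.map_apply (measurable_sphAct g⁻¹) hA,
    Measure.restrict_apply ((measurable_sphAct g⁻¹) hA),
    withDensity_apply _ hA, Measure.restrict_restrict hA]
  have hset : sphAct n g⁻¹ ⁻¹' A ∩ Metric.sphere (0 : EuclideanSpace ℝ (Fin n)) 1
      = sphAct n g '' (A ∩ Metric.sphere (0 : EuclideanSpace ℝ (Fin n)) 1) := by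
    rw [image_eq_inter hg Set.inter_subset_right]
    ext x
    constructor
    · rintro ⟨hxA, hxS⟩
      exact ⟨hxS, hxA, sphAct_mem (lorentz_inv hg) hxS⟩
    · rintro ⟨hxS, hxA, -⟩
      exact ⟨hxA, hxS⟩
  rw [hset, image_measure_eq hn hg (hA.inter hSmeas) Set.inter_subset_right]

theorem statement6' (n : ℕ) (hn : 2 ≤ n)
    (g : Matrix (Fin (n+1)) (Fin (n+1)) ℝ) (hg : IsLorentz n g)
    (f : EuclideanSpace ℝ (Fin n) → ℂ)
    (hf : IntegrableOn f (Metric.sphere (0 : EuclideanSpace ℝ (Fin n)) 1) μH[(n : ℝ) - 1]) :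
    ∫ x in Metric.sphere (0 : EuclideanSpace ℝ (Fin n)) 1,
        f (sphAct n g⁻¹ x) ∂μH[(n : ℝ) - 1]
      = ∫ y in Metric.sphere (0 : EuclideanSpace ℝ (Fin n)) 1,
          (kappa n g y ^ (n - 1)) • f y ∂μH[(n : ℝ) - 1] := by
  have hn1 : 1 ≤ n := le_trans one_le_two hn
  have hSmeas : MeasurableSet (Metric.sphere (0 : EuclideanSpace ℝ (Fin n)) 1) :=
    Metric.isClosed_sphere.measurableSet
  set μ : Measure (EuclideanSpace ℝ (Fin n)) := μH[(n:ℝ)-1] with hμ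
  set S := Metric.sphere (0 : EuclideanSpace ℝ (Fin n)) 1 with hSdef
  set w : EuclideanSpace ℝ (Fin n) → ℝ≥0 :=
    fun x => Real.toNNReal (kappa n g x) ^ (n-1) with hw'
  have hw : Measurable w :=
    (measurable_real_toNNReal.comp (measurable_kappa g)).pow_const _
  have hdens : (fun x : EuclideanSpace ℝ (Fin n)
      => ENNReal.ofReal (kappa n g x) ^ ((n:ℝ)-1)) = fun x => ((w x : ℝ≥0) : ℝ≥0∞) := by
    funext x
    have hcast : ((n:ℝ)-1) = ((n-1 : ℕ) : ℝ) := by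
      rw [Nat.cast_sub hn1]; norm_num
    rw [hcast, ENNReal.rpow_natCast, hw']
    rw [ENNReal.ofReal]
    push_cast
    rfl
  have hmap := map_eq (g := g) hn1 hg
  rw [hdens] at hmap
  have hfm : AEStronglyMeasurable f (Measure.map (sphAct n g⁻¹) (μ.restrict S)) := by
    rw [hmap]
    exact hf.1.mono_ac (withDensity_absolutelyContinuous _ _)
  have h1 : ∫ x in S, f (sphAct n g⁻¹ x) ∂μ
      = ∫ y, f y ∂(Measure.map (sphAct n g⁻¹) (μ.restrict S)) :=
    (integral_map (measurable_sphAct g⁻¹).aemeasurable hfm).symm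
  rw [h1, hmap, integral_withDensity_eq_integral_smul hw f]
  refine integral_congr_ae ?_
  filter_upwards [ae_restrict_mem hSmeas] with y hyS
  have hk : 0 ≤ kappa n g y := le_of_lt (kappa_pos hg hyS)
  rw [hw']
  rw [NNReal.smul_def]
  congr 1
  push_cast
  rw [Real.coe_toNNReal _ hk]

end Stmt6

/-- ∫_S f(g⁻¹(x)) dσ(x) = ∫_S f(y) κ(g,y)^{n-1} dσ(y), where σ is the
(n−1)-dimensional Hausdorff measure on the unit sphere. -/
theorem statement6 (n : ℕ) (hn : 2 ≤ n)
    (g : Matrix (Fin (n+1)) (Fin (n+1)) ℝ) (hg : IsLorentz n g)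
    (f : EuclideanSpace ℝ (Fin n) → ℂ)
    (hf : IntegrableOn f (Metric.sphere (0 : EuclideanSpace ℝ (Fin n)) 1) μH[(n : ℝ) - 1]) :
    ∫ x in Metric.sphere (0 : EuclideanSpace ℝ (Fin n)) 1,
        f (sphAct n g⁻¹ x) ∂μH[(n : ℝ) - 1]
      = ∫ y in Metric.sphere (0 : EuclideanSpace ℝ (Fin n)) 1,
          (kappa n g y ^ (n - 1)) • f y ∂μH[(n : ℝ) - 1] :=
  Stmt6.statement6' n hn g hg f hf
end
end

section
/- The group G acts transitively on the set of ordered pairs of distinct points of S: for all x, y, x', y' ∈ S with x ≠ y and x' ≠ y', there exists g ∈ G with g(x) = x' and g(y) = y'. -/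
open MeasureTheory Matrix

noncomputable section

/-- The matrix of the Lorentz form. -/
def Jmat (n : ℕ) : Matrix (Fin (n+1)) (Fin (n+1)) ℝ :=
  Matrix.diagonal (fun i => if i = 0 then 1 else -1)

lemma lform_eq_sum (n : ℕ) (x y : Fin (n+1) → ℝ) :
    lform n x y = ∑ p : Fin (n+1), (if p = 0 then (1:ℝ) else -1) * x p * y p := by
  rw [Fin.sum_univ_succ, lform]
  simp [Fin.succ_ne_zero]
  rw [sub_eq_add_neg]

lemma lform_eq_dot (n : ℕ) (x y : Fin (n+1) → ℝ) :
    lform n x y = x ⬝ᵥ (Jmat n).mulVec y := by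
  rw [lform_eq_sum]
  simp [dotProduct, Jmat, mulVec_diagonal]

lemma lform_cons (n : ℕ) (a b : ℝ) (u w : Fin n → ℝ) :
    lform n (Fin.cons a u) (Fin.cons b w) = a * b - ∑ i, u i * w i := by
  simp [lform]

lemma dot_ext {n : ℕ} {A B : Matrix (Fin n) (Fin n) ℝ}
    (h : ∀ x y : Fin n → ℝ, x ⬝ᵥ A.mulVec y = x ⬝ᵥ B.mulVec y) : A = B := by
  ext i j
  have := h (Pi.single i 1) (Pi.single j 1)
  simpa [mulVec_single, single_dotProduct] using this

lemma lform_mulVec (n : ℕ) (g : Matrix (Fin (n+1)) (Fin (n+1)) ℝ) (x y : Fin (n+1) → ℝ) :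
    lform n (g.mulVec x) (g.mulVec y) = x ⬝ᵥ (gᵀ * Jmat n * g).mulVec y := by
  rw [lform_eq_dot, ← vecMul_transpose, dotProduct_mulVec, vecMul_vecMul,
    ← dotProduct_mulVec, mulVec_mulVec, Matrix.mul_assoc]

lemma isLorentzForm_iff (n : ℕ) (g : Matrix (Fin (n+1)) (Fin (n+1)) ℝ) :
    (∀ x y : Fin (n+1) → ℝ, lform n (g.mulVec x) (g.mulVec y) = lform n x y)
      ↔ gᵀ * Jmat n * g = Jmat n := by
  constructor
  · intro h
    apply dot_ext
    intro x y
    rw [← lform_mulVec, h, lform_eq_dot]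
  · intro h x y
    rw [lform_mulVec, h, lform_eq_dot]

lemma Jmat_mul_Jmat (n : ℕ) : Jmat n * Jmat n = 1 := by
  rw [Jmat, diagonal_mul_diagonal]
  have : (fun i : Fin (n+1) => (if i = 0 then (1:ℝ) else -1) * (if i = 0 then 1 else -1))
      = fun _ => 1 := by
    funext i; by_cases h : i = 0 <;> simp [h]
  rw [this, diagonal_one]

lemma tr_J_mul_apply (n : ℕ) (M : Matrix (Fin (n+1)) (Fin (n+1)) ℝ) (i j : Fin (n+1)) :
    (Mᵀ * Jmat n * M) i j = lform n (fun p => M p i) (fun p => M p j) := by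
  rw [lform_eq_sum, Matrix.mul_apply]
  congr 1
  funext p
  rw [Jmat, Matrix.mul_apply]
  simp only [mul_diagonal, transpose_apply]
  rw [Finset.sum_eq_single p (by intro b _ hb; simp [diagonal, hb]) (by simp)]
  simp only [diagonal_apply_eq]
  ring

/-- column relation -/
lemma lorentz_col (n : ℕ) {g : Matrix (Fin (n+1)) (Fin (n+1)) ℝ}
    (h : gᵀ * Jmat n * g = Jmat n) :
    g 0 0 ^ 2 = 1 + ∑ i : Fin n, g i.succ 0 ^ 2 := by
  have h0 := congrFun (congrFun h 0) 0
  rw [tr_J_mul_apply] at h0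
  rw [lform] at h0
  simp [Jmat, diagonal_apply_eq] at h0
  have h2 : ∀ i : Fin n, g i.succ 0 * g i.succ 0 = g i.succ 0 ^2 := by intro i; ring
  rw [Finset.sum_congr rfl (fun i _ => h2 i)] at h0
  nlinarith [h0]

lemma lorentz_inv_mul (n : ℕ) {g : Matrix (Fin (n+1)) (Fin (n+1)) ℝ}
    (h : gᵀ * Jmat n * g = Jmat n) :
    (Jmat n * gᵀ * Jmat n) * g = 1 ∧ g * (Jmat n * gᵀ * Jmat n) = 1 := by
  have h1 : (Jmat n * gᵀ * Jmat n) * g = 1 := by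
    calc (Jmat n * gᵀ * Jmat n) * g = Jmat n * (gᵀ * Jmat n * g) := by
          simp only [Matrix.mul_assoc]
      _ = 1 := by rw [h, Jmat_mul_Jmat]
  exact ⟨h1, mul_eq_one_comm.mp h1⟩

lemma lorentz_row (n : ℕ) {g : Matrix (Fin (n+1)) (Fin (n+1)) ℝ}
    (h : gᵀ * Jmat n * g = Jmat n) :
    g 0 0 ^ 2 = 1 + ∑ i : Fin n, g 0 i.succ ^ 2 := by
  have h2 := (lorentz_inv_mul n h).2
  -- g * J * gᵀ * J = 1 hence g * J * gᵀ = J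
  have h3 : g * Jmat n * gᵀ * Jmat n = 1 := by
    calc g * Jmat n * gᵀ * Jmat n = g * (Jmat n * gᵀ * Jmat n) := by simp only [Matrix.mul_assoc]
      _ = 1 := h2
  have h4 : g * Jmat n * gᵀ = Jmat n := by
    have := congrArg (fun A => A * Jmat n) h3
    simpa [Matrix.mul_assoc, Jmat_mul_Jmat] using this
  -- transpose-side relation for gᵀ
  have h5 : gᵀᵀ * Jmat n * gᵀ = Jmat n := by
    rw [transpose_transpose]; exact h4
  simpa using lorentz_col n h5

lemma isLorentz_mul {n : ℕ} {g h : Matrix (Fin (n+1)) (Fin (n+1)) ℝ}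
    (hg : IsLorentz n g) (hh : IsLorentz n h) : IsLorentz n (g * h) := by
  obtain ⟨hg1, hg2, hg3⟩ := hg
  obtain ⟨hh1, hh2, hh3⟩ := hh
  refine ⟨?_, ?_, ?_⟩
  · intro x y
    simp only [← mulVec_mulVec]
    rw [hg1, hh1]
  · rw [Matrix.det_mul, hg2, hh2, mul_one]
  · have hgJ := (isLorentzForm_iff n g).mp hg1
    have hhJ := (isLorentzForm_iff n h).mp hh1
    have hrow := lorentz_row n hgJ
    have hcol := lorentz_col n hhJ
    have hmul : (g * h) 0 0 = g 0 0 * h 0 0 + ∑ i : Fin n, g 0 i.succ * h i.succ 0 := by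
      rw [Matrix.mul_apply, Fin.sum_univ_succ]
    have hcs := Finset.sum_mul_sq_le_sq_mul_sq Finset.univ
      (fun i : Fin n => g 0 i.succ) (fun i : Fin n => h i.succ 0)
    have hA : (0:ℝ) ≤ ∑ i : Fin n, g 0 i.succ ^ 2 := Finset.sum_nonneg fun i _ => sq_nonneg _
    have hB : (0:ℝ) ≤ ∑ i : Fin n, h i.succ 0 ^ 2 := Finset.sum_nonneg fun i _ => sq_nonneg _
    rw [hmul]
    nlinarith [hcs, hg3, hh3, hrow, hcol, sq_nonneg (g 0 0 * h 0 0),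
      mul_pos hg3 hh3]

lemma isLorentz_inv {n : ℕ} {g : Matrix (Fin (n+1)) (Fin (n+1)) ℝ}
    (hg : IsLorentz n g) :
    IsLorentz n (Jmat n * gᵀ * Jmat n) ∧ (Jmat n * gᵀ * Jmat n) * g = 1
      ∧ g * (Jmat n * gᵀ * Jmat n) = 1 := by
  obtain ⟨hg1, hg2, hg3⟩ := hg
  have hgJ := (isLorentzForm_iff n g).mp hg1
  obtain ⟨hinv1, hinv2⟩ := lorentz_inv_mul n hgJ
  set h := Jmat n * gᵀ * Jmat n with hh
  have h00 : h 0 0 = g 0 0 := by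
    rw [hh, Jmat]
    simp [diagonal_mul, mul_diagonal]
  refine ⟨⟨?_, ?_, ?_⟩, hinv1, hinv2⟩
  · intro x y
    have := hg1 (h.mulVec x) (h.mulVec y)
    simpa [mulVec_mulVec, hinv2] using this.symm
  · have := congrArg Matrix.det hinv1
    rw [Matrix.det_mul, hg2, mul_one, Matrix.det_one] at this
    exact this
  · rw [h00]; exact hg3

lemma lform_tilde (n : ℕ) (x y : EuclideanSpace ℝ (Fin n)) :
    lform n (tilde n x) (tilde n y) = 1 - ∑ i, x i * y i := by
  rw [tilde, tilde, lform_cons]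
  norm_num

lemma sum_sq_eq_one {n : ℕ} {x : EuclideanSpace ℝ (Fin n)} (hx : ‖x‖ = 1) :
    ∑ i, x i * x i = 1 := by
  have h := real_inner_self_eq_norm_sq x
  rw [hx] at h
  rw [PiLp.inner_apply] at h
  simpa [RCLike.inner_apply, ← sq] using h

lemma mulVec_tilde_ne_zero {n : ℕ} {g : Matrix (Fin (n+1)) (Fin (n+1)) ℝ}
    (hg : IsLorentz n g) {x : EuclideanSpace ℝ (Fin n)} (hx : ‖x‖ = 1) :
    g.mulVec (tilde n x) 0 ≠ 0 := by
  intro h0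
  have hnull : lform n (g.mulVec (tilde n x)) (g.mulVec (tilde n x)) = 0 := by
    rw [hg.1, lform_tilde, sum_sq_eq_one hx]; ring
  rw [lform, h0] at hnull
  have hz : ∀ i : Fin n, g.mulVec (tilde n x) i.succ = 0 := by
    intro i
    have hsum : ∑ i : Fin n, g.mulVec (tilde n x) i.succ * g.mulVec (tilde n x) i.succ = 0 := by
      linarith
    have := Finset.sum_eq_zero_iff_of_nonneg
      (fun i _ => mul_self_nonneg (g.mulVec (tilde n x) i.succ)) |>.mp hsum i (Finset.mem_univ i)
    exact mul_self_eq_zero.mp this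
  have hvec : g.mulVec (tilde n x) = 0 := by
    funext p
    refine Fin.cases ?_ ?_ p
    · exact h0
    · exact hz
  -- apply inverse
  obtain ⟨hinv, hinv1, hinv2⟩ := isLorentz_inv hg
  have : tilde n x = 0 := by
    have h1 : (Jmat n * gᵀ * Jmat n).mulVec (g.mulVec (tilde n x)) = tilde n x := by
      rw [mulVec_mulVec, hinv1, one_mulVec]
    rw [hvec] at h1
    rw [← h1, mulVec_zero]
  have := congrFun this 0
  rw [tilde] at this
  simp at this

lemma tilde_sphAct {n : ℕ} (g : Matrix (Fin (n+1)) (Fin (n+1)) ℝ)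
    (x : EuclideanSpace ℝ (Fin n)) (h : g.mulVec (tilde n x) 0 ≠ 0) :
    tilde n (sphAct n g x) = (g.mulVec (tilde n x) 0)⁻¹ • g.mulVec (tilde n x) := by
  funext p
  refine Fin.cases ?_ ?_ p
  · rw [tilde]
    simp [inv_mul_cancel₀ h]
  · intro i
    rw [tilde]
    simp [sphAct, div_eq_inv_mul]

lemma sphAct_mul {n : ℕ} (g h : Matrix (Fin (n+1)) (Fin (n+1)) ℝ)
    (x : EuclideanSpace ℝ (Fin n)) (hh : h.mulVec (tilde n x) 0 ≠ 0) :
    sphAct n (g * h) x = sphAct n g (sphAct n h x) := by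
  ext i
  have key := tilde_sphAct h x hh
  show sphAct n (g*h) x i = sphAct n g (sphAct n h x) i
  rw [sphAct, sphAct, key]
  simp only [PiLp.toLp_apply]
  set c := h.mulVec (tilde n x) 0
  rw [mulVec_smul]
  simp only [Pi.smul_apply, smul_eq_mul, ← mulVec_mulVec]
  rw [mul_div_mul_left _ _ (inv_ne_zero hh)]

lemma sphAct_one {n : ℕ} (x : EuclideanSpace ℝ (Fin n)) : sphAct n 1 x = x := by
  ext i
  show sphAct n 1 x i = x i
  rw [sphAct]
  simp [one_mulVec, tilde]

/-- From a Lorentz matrix with prescribed behaviour on two null vectors, get the normal form. -/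
lemma build (m : ℕ) (N : Matrix (Fin (m+3)) (Fin (m+3)) ℝ)
    (hNJ : Nᵀ * Jmat (m+2) * N = Jmat (m+2)) (hdet : N.det = 1) (hpos : 0 < N 0 0)
    (x y : EuclideanSpace ℝ (Fin (m+2))) (r : ℝ) (hr : 0 < r)
    (hNx : N.mulVec ((r/2) • (Pi.single (0 : Fin (m+3)) (1:ℝ) + Pi.single 1 1)) = tilde (m+2) x)
    (hNy : N.mulVec ((r/2) • (Pi.single (0 : Fin (m+3)) (1:ℝ) - Pi.single 1 1)) = tilde (m+2) y) :
    ∃ g, IsLorentz (m+2) g ∧ sphAct (m+2) g x = EuclideanSpace.single 0 1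
      ∧ sphAct (m+2) g y = -(EuclideanSpace.single 0 1) := by
  have hN : IsLorentz (m+2) N := ⟨(isLorentzForm_iff _ N).mpr hNJ, hdet, hpos⟩
  obtain ⟨hg, hg1, hg2⟩ := isLorentz_inv hN
  set g := Jmat (m+2) * Nᵀ * Jmat (m+2) with hgdef
  have hr2 : r/2 ≠ 0 := by positivity
  have hgx : g.mulVec (tilde (m+2) x)
      = (r/2) • (Pi.single (0 : Fin (m+3)) (1:ℝ) + Pi.single 1 1) := by
    rw [← hNx, mulVec_mulVec, hg1, one_mulVec]
  have hgy : g.mulVec (tilde (m+2) y)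
      = (r/2) • (Pi.single (0 : Fin (m+3)) (1:ℝ) - Pi.single 1 1) := by
    rw [← hNy, mulVec_mulVec, hg1, one_mulVec]
  refine ⟨g, hg, ?_, ?_⟩
  · ext i
    show g.mulVec (tilde (m+2) x) i.succ / g.mulVec (tilde (m+2) x) 0 = _
    rw [hgx]
    have h0 : ((r/2) • ((Pi.single (0 : Fin (m+3)) (1:ℝ)) + (Pi.single (1 : Fin (m+3)) (1:ℝ))) : Fin (m+3) → ℝ) 0 = r/2 := by
      simp [Pi.single_apply]
    have hs : ((r/2) • ((Pi.single (0 : Fin (m+3)) (1:ℝ)) + (Pi.single (1 : Fin (m+3)) (1:ℝ))) : Fin (m+3) → ℝ) i.succ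
        = (r/2) * (if i = 0 then 1 else 0) := by
      have : (i.succ = (1 : Fin (m+3))) ↔ i = 0 := by
        rw [show (1 : Fin (m+3)) = (0 : Fin (m+2)).succ from rfl, Fin.succ_inj]
      simp [Pi.single_apply, Fin.succ_ne_zero, this]
    rw [h0, hs, mul_comm (r/2), mul_div_assoc, div_self hr2, mul_one]
    rw [EuclideanSpace.single_apply]
  -- second point
  · ext i
    show g.mulVec (tilde (m+2) y) i.succ / g.mulVec (tilde (m+2) y) 0 = _
    rw [hgy]
    have h0 : ((r/2) • ((Pi.single (0 : Fin (m+3)) (1:ℝ)) - (Pi.single (1 : Fin (m+3)) (1:ℝ))) : Fin (m+3) → ℝ) 0 = r/2 := by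
      simp [Pi.single_apply]
    have hs : ((r/2) • ((Pi.single (0 : Fin (m+3)) (1:ℝ)) - (Pi.single (1 : Fin (m+3)) (1:ℝ))) : Fin (m+3) → ℝ) i.succ
        = (r/2) * (-(if i = 0 then 1 else 0)) := by
      have h1 : (i.succ = (1 : Fin (m+3))) ↔ i = 0 := by
        rw [show (1 : Fin (m+3)) = (0 : Fin (m+2)).succ from rfl, Fin.succ_inj]
      by_cases hi : i = 0 <;> simp [Pi.single_apply, Fin.succ_ne_zero, h1, hi]
    rw [h0, hs, mul_comm (r/2), mul_div_assoc, div_self hr2, mul_one]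
    show _ = -(EuclideanSpace.single (0 : Fin (m+2)) (1:ℝ) i)
    rw [EuclideanSpace.single_apply]

lemma fin3_zero_ne_one (m : ℕ) : (0 : Fin (m+3)) ≠ 1 := (Fin.succ_ne_zero (0:Fin (m+2))).symm

lemma fin3_zero_ne_two (m : ℕ) : (0 : Fin (m+3)) ≠ 2 := (Fin.succ_ne_zero (1:Fin (m+2))).symm

/-- Spatial rotation by π in the (1,2) plane. -/
def sig (m : ℕ) : Matrix (Fin (m+3)) (Fin (m+3)) ℝ :=
  Matrix.diagonal (fun p => if p = 1 then -1 else if p = 2 then -1 else 1)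

lemma sig_lorentz (m : ℕ) : IsLorentz (m+2) (sig m) := by
  refine ⟨?_, ?_, ?_⟩
  · intro u v
    rw [lform_eq_sum, lform_eq_sum]
    refine Finset.sum_congr rfl ?_
    intro p _
    simp only [sig]
    rw [mulVec_diagonal, mulVec_diagonal]
    by_cases h1 : p = 1 <;> by_cases h2 : p = 2 <;> simp [h1, h2] <;> ring
  · rw [sig, det_diagonal, Fin.prod_univ_succ, Fin.prod_univ_succ]
    have key : ∀ i : Fin (m+1),
        (if i.succ.succ = (1:Fin (m+3)) then (-1:ℝ) else if i.succ.succ = 2 then -1 else 1)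
          = (if i = 0 then -1 else 1) := by
      intro i
      have h1 : i.succ.succ ≠ (1 : Fin (m+3)) :=
        fun h => Fin.succ_ne_zero i (Fin.succ_inj.mp h)
      have h2 : (i.succ.succ = (2 : Fin (m+3))) ↔ i = 0 := by
        rw [show (2:Fin (m+3)) = ((0 : Fin (m+1)).succ).succ from rfl, Fin.succ_inj, Fin.succ_inj]
      simp [h1, h2]
    rw [Finset.prod_congr rfl (fun i _ => key i), Finset.prod_ite_eq']
    simp [fin3_zero_ne_one, fin3_zero_ne_two]
  · rw [sig]
    rw [diagonal_apply_eq]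
    simp [fin3_zero_ne_one, fin3_zero_ne_two]

lemma sphAct_sig (m : ℕ) (z : EuclideanSpace ℝ (Fin (m+2))) :
    sphAct (m+2) (sig m) z
      = fun i => (if i.succ = (1:Fin (m+3)) then (-1:ℝ) else if i.succ = 2 then -1 else 1) * z i := by
  funext i
  show (sig m).mulVec (tilde (m+2) z) i.succ / (sig m).mulVec (tilde (m+2) z) 0 = _
  simp only [sig]
  rw [mulVec_diagonal, mulVec_diagonal]
  rw [tilde]
  simp [fin3_zero_ne_one, fin3_zero_ne_two]

lemma sphAct_sig_E (m : ℕ) :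
    sphAct (m+2) (sig m) (EuclideanSpace.single 0 1) = -(EuclideanSpace.single 0 1) := by
  apply WithLp.ofLp_injective
  rw [sphAct_sig]
  funext i
  by_cases hi : i = 0
  · subst hi
    norm_num [EuclideanSpace.single_apply]
  · have h1 : EuclideanSpace.single (0:Fin (m+2)) (1:ℝ) i = 0 := by
      rw [EuclideanSpace.single_apply]; simp [hi]
    show _ * EuclideanSpace.single (0:Fin (m+2)) (1:ℝ) i
        = -(EuclideanSpace.single (0:Fin (m+2)) (1:ℝ) i)
    rw [h1]; ring

lemma sphAct_sig_negE (m : ℕ) :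
    sphAct (m+2) (sig m) (-(EuclideanSpace.single 0 1)) = EuclideanSpace.single 0 1 := by
  apply WithLp.ofLp_injective
  rw [sphAct_sig]
  funext i
  by_cases hi : i = 0
  · subst hi
    norm_num [EuclideanSpace.single_apply]
  · have h1 : EuclideanSpace.single (0:Fin (m+2)) (1:ℝ) i = 0 := by
      rw [EuclideanSpace.single_apply]; simp [hi]
    show _ * (-(EuclideanSpace.single (0:Fin (m+2)) (1:ℝ))) i
        = EuclideanSpace.single (0:Fin (m+2)) (1:ℝ) i
    have h2 : (-(EuclideanSpace.single (0:Fin (m+2)) (1:ℝ))) i = 0 := by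
      show -(EuclideanSpace.single (0:Fin (m+2)) (1:ℝ) i) = 0
      rw [h1]; ring
    rw [h1, h2]; ring

lemma lform_comm (n : ℕ) (u w : Fin (n+1) → ℝ) : lform n u w = lform n w u := by
  rw [lform, lform]
  congr 1
  · ring
  · exact Finset.sum_congr rfl fun i _ => by ring

lemma normalForm (m : ℕ) (x y : EuclideanSpace ℝ (Fin (m+2)))
    (hx : ‖x‖ = 1) (hy : ‖y‖ = 1) (hxy : x ≠ y) :
    ∃ g, IsLorentz (m+2) g ∧ sphAct (m+2) g x = EuclideanSpace.single 0 1
      ∧ sphAct (m+2) g y = -(EuclideanSpace.single 0 1) := by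
  have hx2 : ∑ i, x i * x i = 1 := sum_sq_eq_one hx
  have hy2 : ∑ i, y i * y i = 1 := sum_sq_eq_one hy
  obtain ⟨d, hd⟩ : ∃ d : ℝ, d = ∑ i, x i * y i := ⟨_, rfl⟩
  have key : ∀ c1 c2 c3 : ℝ, ∑ i, (c1 * (x i * x i) + c2 * (x i * y i) + c3 * (y i * y i))
      = c1 + c2 * d + c3 := by
    intro c1 c2 c3
    rw [Finset.sum_add_distrib, Finset.sum_add_distrib, ← Finset.mul_sum, ← Finset.mul_sum,
      ← Finset.mul_sum, hx2, hy2, ← hd]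
    ring
  have hd1 : d < 1 := by
    have hne : x - y ≠ 0 := sub_ne_zero.mpr hxy
    obtain ⟨i0, hi0⟩ : ∃ i, x i - y i ≠ 0 := by
      by_contra hcon
      push_neg at hcon
      apply hne
      ext i
      show x i - y i = 0
      exact hcon i
    have hpos : 0 < ∑ i, (x i - y i) * (x i - y i) :=
      Finset.sum_pos' (fun i _ => mul_self_nonneg _)
        ⟨i0, Finset.mem_univ i0, mul_self_pos.mpr hi0⟩
    have hexp : ∑ i, (x i - y i) * (x i - y i) = 2 - 2*d := by
      calc ∑ i, (x i - y i) * (x i - y i)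
          = ∑ i, ((1:ℝ) * (x i * x i) + (-2) * (x i * y i) + 1 * (y i * y i)) :=
            Finset.sum_congr rfl fun i _ => by ring
        _ = 1 + (-2) * d + 1 := key _ _ _
        _ = 2 - 2*d := by ring
    linarith
  obtain ⟨c, hc⟩ : ∃ c : ℝ, c = 1 - d := ⟨_, rfl⟩
  have hcpos : 0 < c := by rw [hc]; linarith
  obtain ⟨r, hrdef⟩ : ∃ r : ℝ, r = Real.sqrt (2*c) := ⟨_, rfl⟩
  have hr : 0 < r := by rw [hrdef]; exact Real.sqrt_pos.mpr (by linarith)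
  have hrne : r ≠ 0 := ne_of_gt hr
  have hr2 : r^2 = 2*c := by rw [hrdef]; exact Real.sq_sqrt (by linarith)
  obtain ⟨q, hqdef⟩ : ∃ q : Fin (m+2) → ℝ, q = fun i => (x i + y i)/2 := ⟨_, rfl⟩
  have hqi : ∀ i, q i = (x i + y i)/2 := fun i => by rw [hqdef]
  obtain ⟨k, hk⟩ : ∃ k : ℝ, k = ∑ i, q i * q i := ⟨_, rfl⟩
  have hkval : k = (1+d)/2 := by
    rw [hk]
    calc ∑ i, q i * q i
        = ∑ i, ((1/4) * (x i * x i) + (1/2) * (x i * y i) + (1/4) * (y i * y i)) :=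
          Finset.sum_congr rfl fun i _ => by rw [hqi]; ring
      _ = 1/4 + (1/2) * d + 1/4 := key _ _ _
      _ = (1+d)/2 := by ring
  have h1kpos : 0 < 1 - k := by rw [hkval, hc] at *; linarith
  obtain ⟨e, hedef⟩ : ∃ e : ℝ, e = Real.sqrt (1-k) := ⟨_, rfl⟩
  have he : 0 < e := by rw [hedef]; exact Real.sqrt_pos.mpr h1kpos
  have he2 : e^2 = 1-k := by rw [hedef]; exact Real.sq_sqrt (le_of_lt h1kpos)
  obtain ⟨μ, hmu⟩ : ∃ μ : ℝ, μ = (1-e)/(k*e) := ⟨_, rfl⟩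
  have hmu_id : k ≠ 0 → (1 + μ*k)^2 = 2*μ + μ^2*k := by
    intro hk0
    have hene : e ≠ 0 := ne_of_gt he
    have hke : μ * (k*e) = 1 - e := by
      rw [hmu]
      exact div_mul_cancel₀ _ (mul_ne_zero hk0 hene)
    have h5 : ((1+μ*k)^2 - (2*μ + μ^2*k)) * (e^2*k) = 0 := by
      linear_combination he2 + ((k-1)*(μ*k*e + 1 + e)) * hke
    have h6 : e^2*k ≠ 0 := mul_ne_zero (pow_ne_zero 2 hene) hk0
    have h7 := (mul_eq_zero.mp h5).resolve_right h6
    linarith [h7]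

  -- orthonormal basis of the orthogonal complement of x - y
  have hsub_ne : x - y ≠ 0 := sub_ne_zero.mpr hxy
  haveI : Fact (Module.finrank ℝ (EuclideanSpace ℝ (Fin (m+2))) = (m+1)+1) :=
    ⟨by simp⟩
  obtain ⟨B, -⟩ : ∃ B : OrthonormalBasis (Fin (m+1)) ℝ ((ℝ ∙ (x - y))ᗮ), True :=
    ⟨OrthonormalBasis.fromOrthogonalSpanSingleton (m+1) hsub_ne, trivial⟩
  obtain ⟨f, hfdef⟩ : ∃ f : Fin (m+1) → EuclideanSpace ℝ (Fin (m+2)),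
      f = fun j => (B j : EuclideanSpace ℝ (Fin (m+2))) := ⟨_, rfl⟩
  have hforth : ∀ j l, ∑ i, f j i * f l i = if j = l then 1 else 0 := by
    intro j l
    have horm := B.orthonormal
    rw [orthonormal_iff_ite] at horm
    have h2 := horm j l
    have h3 : (inner ℝ (f j) (f l) : ℝ) = if j = l then 1 else 0 := by
      rw [hfdef]
      rw [← Submodule.coe_inner]
      exact h2
    simpa [PiLp.inner_apply, RCLike.inner_apply, mul_comm] using h3
  have hfV : ∀ j, ∑ i, (x i - y i) * f j i = 0 := by
    intro j
    have hmem := (B j).2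
    rw [Submodule.mem_orthogonal] at hmem
    have h3 : (inner ℝ (x - y) (f j) : ℝ) = 0 := by
      rw [hfdef]
      exact hmem (x-y) (Submodule.mem_span_singleton_self _)
    simpa [PiLp.inner_apply, RCLike.inner_apply, PiLp.sub_apply, mul_comm] using h3
  have hqV : ∑ i, (x i - y i) * q i = 0 := by
    calc ∑ i, (x i - y i) * q i
        = ∑ i, ((1/2) * (x i * x i) + 0 * (x i * y i) + (-(1/2)) * (y i * y i)) :=
          Finset.sum_congr rfl fun i _ => by rw [hqi]; ring
      _ = 1/2 + 0 * d + (-(1/2)) := key _ _ _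
      _ = 0 := by ring
  obtain ⟨a, hadef⟩ : ∃ a : Fin (m+1) → ℝ, a = fun j => ∑ i, f j i * q i := ⟨_, rfl⟩
  have haj : ∀ j, a j = ∑ i, f j i * q i := fun j => by rw [hadef]
  have hfq_comm : ∀ j, ∑ i, q i * f j i = a j := by
    intro j
    rw [haj]
    exact Finset.sum_congr rfl fun i _ => by ring
  obtain ⟨v, hvdef⟩ : ∃ v : Fin (m+1) → Fin (m+2) → ℝ,
      v = fun j i => f j i + (μ * a j) * q i := ⟨_, rfl⟩
  have hvj : ∀ j i, v j i = f j i + (μ * a j) * q i := fun j i => by rw [hvdef]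
  have hvq : ∀ j, ∑ i, v j i * q i = a j * (1 + μ*k) := by
    intro j
    calc ∑ i, v j i * q i
        = ∑ i, (f j i * q i + (μ * a j) * (q i * q i)) :=
          Finset.sum_congr rfl fun i _ => by rw [hvj]; ring
      _ = (∑ i, f j i * q i) + (μ * a j) * ∑ i, q i * q i := by
          rw [Finset.sum_add_distrib, ← Finset.mul_sum]
      _ = a j + (μ * a j) * k := by rw [← haj, ← hk]
      _ = a j * (1 + μ*k) := by ring
  have hvv : ∀ j l, ∑ i, v j i * v l i
      = (if j = l then 1 else 0) + (2*μ + μ^2*k) * (a j * a l) := by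
    intro j l
    calc ∑ i, v j i * v l i
        = ∑ i, (f j i * f l i + (μ * a l) * (f j i * q i) + (μ * a j) * (q i * f l i)
            + (μ * a j * (μ * a l)) * (q i * q i)) :=
          Finset.sum_congr rfl fun i _ => by rw [hvj, hvj]; ring
      _ = (∑ i, f j i * f l i) + (μ * a l) * (∑ i, f j i * q i)
            + (μ * a j) * (∑ i, q i * f l i) + (μ * a j * (μ * a l)) * ∑ i, q i * q i := by
          rw [Finset.sum_add_distrib, Finset.sum_add_distrib, Finset.sum_add_distrib,
            ← Finset.mul_sum, ← Finset.mul_sum, ← Finset.mul_sum]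
      _ = (if j = l then 1 else 0) + (μ * a l) * a j + (μ * a j) * a l
            + (μ * a j * (μ * a l)) * k := by
          rw [hforth, ← haj, hfq_comm, ← hk]
      _ = (if j = l then 1 else 0) + (2*μ + μ^2*k) * (a j * a l) := by ring
  have hvV : ∀ j, ∑ i, (x i - y i) * v j i = 0 := by
    intro j
    calc ∑ i, (x i - y i) * v j i
        = ∑ i, ((x i - y i) * f j i + (μ * a j) * ((x i - y i) * q i)) :=
          Finset.sum_congr rfl fun i _ => by rw [hvj]; ring
      _ = (∑ i, (x i - y i) * f j i) + (μ * a j) * ∑ i, (x i - y i) * q i := by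
          rw [Finset.sum_add_distrib, ← Finset.mul_sum]
      _ = 0 := by rw [hfV, hqV]; ring
  -- the matrix
  obtain ⟨tv, htv⟩ : ∃ tv : Fin (m+3) → ℝ,
      tv = Fin.cons (2/r) (fun i => (x i + y i)/r) := ⟨_, rfl⟩
  obtain ⟨sv, hsv⟩ : ∃ sv : Fin (m+3) → ℝ,
      sv = Fin.cons 0 (fun i => (x i - y i)/r) := ⟨_, rfl⟩
  obtain ⟨wv, hwv⟩ : ∃ wv : Fin (m+1) → Fin (m+3) → ℝ,
      wv = fun j => Fin.cons (∑ i, v j i * q i) (v j) := ⟨_, rfl⟩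
  obtain ⟨F, hF⟩ : ∃ F : Fin (m+3) → Fin (m+3) → ℝ,
      F = Fin.cons tv (Fin.cons sv wv) := ⟨_, rfl⟩
  obtain ⟨M, hM⟩ : ∃ M : Matrix (Fin (m+3)) (Fin (m+3)) ℝ, M = (Matrix.of F)ᵀ := ⟨_, rfl⟩
  have hF0 : F 0 = tv := by rw [hF]; exact Fin.cons_zero _ _
  have hF1 : F (0 : Fin (m+2)).succ = sv := by
    rw [hF, Fin.cons_succ]
    exact Fin.cons_zero _ _
  have hFsucc : ∀ j : Fin (m+1), F j.succ.succ = wv j := by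
    intro j
    rw [hF, Fin.cons_succ, Fin.cons_succ]
  -- lform values
  have htt : lform (m+2) tv tv = 1 := by
    rw [htv, lform_cons]
    have h1 : ∑ i, (x i + y i)/r * ((x i + y i)/r)
        = ∑ i, ((1/r^2) * (x i * x i) + (2/r^2) * (x i * y i) + (1/r^2) * (y i * y i)) :=
      Finset.sum_congr rfl fun i _ => by field_simp; ring
    rw [h1, key]
    have h4 : 2/r * (2/r) = 4/r^2 := by rw [div_mul_div_comm, pow_two r]; norm_num
    have hdne : (1:ℝ) - d ≠ 0 := ne_of_gt (by linarith)
    rw [h4, hr2, hc]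
    field_simp
    ring
  have hts : lform (m+2) tv sv = 0 := by
    rw [htv, hsv, lform_cons]
    have h1 : ∑ i, (x i + y i)/r * ((x i - y i)/r)
        = ∑ i, ((1/r^2) * (x i * x i) + 0 * (x i * y i) + (-(1/r^2)) * (y i * y i)) :=
      Finset.sum_congr rfl fun i _ => by field_simp; ring
    rw [h1, key]
    ring
  have hss : lform (m+2) sv sv = -1 := by
    rw [hsv, lform_cons]
    have h1 : ∑ i, (x i - y i)/r * ((x i - y i)/r)
        = ∑ i, ((1/r^2) * (x i * x i) + (-2/r^2) * (x i * y i) + (1/r^2) * (y i * y i)) :=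
      Finset.sum_congr rfl fun i _ => by field_simp; ring
    rw [h1, key, hr2, hc]
    have hdne : (1:ℝ) - d ≠ 0 := ne_of_gt (by linarith)
    field_simp
    ring
  have htw : ∀ j, lform (m+2) tv (wv j) = 0 := by
    intro j
    rw [htv, hwv]
    show lform (m+2) _ (Fin.cons (∑ i, v j i * q i) (v j)) = 0
    rw [lform_cons]
    have h2 : ∑ i, (x i + y i)/r * v j i = (2/r) * ∑ i, v j i * q i := by
      rw [Finset.mul_sum]
      refine Finset.sum_congr rfl fun i _ => ?_
      rw [hqi]
      field_simp
    rw [h2]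
    ring
  have hsw : ∀ j, lform (m+2) sv (wv j) = 0 := by
    intro j
    rw [hsv, hwv]
    show lform (m+2) _ (Fin.cons (∑ i, v j i * q i) (v j)) = 0
    rw [lform_cons]
    have h2 : ∑ i, (x i - y i)/r * v j i = (1/r) * ∑ i, (x i - y i) * v j i := by
      rw [Finset.mul_sum]
      exact Finset.sum_congr rfl fun i _ => by ring
    rw [h2, hvV]
    ring
  have hww : ∀ j l, lform (m+2) (wv j) (wv l) = if j = l then -1 else 0 := by
    intro j l
    rw [hwv]
    show lform (m+2) (Fin.cons (∑ i, v j i * q i) (v j))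
      (Fin.cons (∑ i, v l i * q i) (v l)) = _
    rw [lform_cons, hvq, hvq, hvv]
    by_cases hk0 : k = 0
    · have hq0 : ∀ i, q i = 0 := by
        intro i
        have h0 : ∑ i, q i * q i = 0 := by rw [← hk]; exact hk0
        have h5 := (Finset.sum_eq_zero_iff_of_nonneg
          (fun i _ => mul_self_nonneg (q i))).mp h0 i (Finset.mem_univ i)
        exact mul_self_eq_zero.mp h5
      have ha0 : ∀ j', a j' = 0 := by
        intro j'
        rw [haj]
        exact Finset.sum_eq_zero fun i _ => by rw [hq0]; ring
      rw [ha0 j, ha0 l]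
      by_cases hjl : j = l <;> simp [hjl]
    · have hmu2 := hmu_id hk0
      by_cases hjl : j = l
      · simp only [hjl, eq_self_iff_true, if_true]
        linear_combination (a l * a l) * hmu2
      · simp only [if_neg hjl]
        linear_combination (a j * a l) * hmu2
  -- Gram identity
  have horth : ∀ p p' : Fin (m+3), lform (m+2) (F p) (F p') = Jmat (m+2) p p' := by
    have hJdiag : ∀ p : Fin (m+3), Jmat (m+2) p p = if p = 0 then 1 else -1 :=
      fun p => diagonal_apply_eq _ p
    have hJne : ∀ p p' : Fin (m+3), p ≠ p' → Jmat (m+2) p p' = 0 :=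
      fun p p' h => diagonal_apply_ne _ h
    intro p p'
    refine Fin.cases ?_ ?_ p
    · refine Fin.cases ?_ ?_ p'
      · rw [hF0, htt, hJdiag]; simp
      · intro p1
        rw [hF0, hJne _ _ (Fin.succ_ne_zero p1).symm]
        refine Fin.cases ?_ ?_ p1
        · rw [hF1, hts]
        · intro p2
          rw [hFsucc, htw]
    · intro p1
      refine Fin.cases ?_ ?_ p'
      · rw [hF0, hJne _ _ (Fin.succ_ne_zero p1), lform_comm]
        refine Fin.cases ?_ ?_ p1
        · rw [hF1, hts]
        · intro p2
          rw [hFsucc, htw]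
      · intro p1'
        refine Fin.cases ?_ ?_ p1
        · refine Fin.cases ?_ ?_ p1'
          · rw [hF1, hss, hJdiag]
            simp [Fin.succ_ne_zero]
          · intro p2
            rw [hF1, hFsucc, hsw,
              hJne _ _ (fun h => (Fin.succ_ne_zero p2).symm (Fin.succ_inj.mp h))]
        · intro p2
          refine Fin.cases ?_ ?_ p1'
          · rw [hF1, hFsucc, lform_comm, hsw,
              hJne _ _ (fun h => (Fin.succ_ne_zero p2) (Fin.succ_inj.mp h))]
          · intro p2'
            rw [hFsucc, hFsucc, hww]
            by_cases hjl : p2 = p2'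
            · subst hjl
              rw [hJdiag]
              simp [Fin.succ_ne_zero]
            · rw [if_neg hjl, hJne]
              intro h
              exact hjl (Fin.succ_inj.mp (Fin.succ_inj.mp h))
  have hMJ : Mᵀ * Jmat (m+2) * M = Jmat (m+2) := by
    ext p p'
    rw [tr_J_mul_apply]
    have h1 : (fun i => M i p) = F p := by funext i; rw [hM]; rfl
    have h2 : (fun i => M i p') = F p' := by funext i; rw [hM]; rfl
    rw [h1, h2]
    exact horth p p'
  -- determinant is ±1
  have hJdet1 : (Jmat (m+2)).det * (Jmat (m+2)).det = 1 := by
    have h9 := congrArg Matrix.det (Jmat_mul_Jmat (m+2))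
    rwa [Matrix.det_mul, Matrix.det_one] at h9
  have hJdetne : (Jmat (m+2)).det ≠ 0 := left_ne_zero_of_mul_eq_one hJdet1
  have hdet2 : M.det * M.det = 1 := by
    have h5 := congrArg Matrix.det hMJ
    rw [Matrix.det_mul, Matrix.det_mul, Matrix.det_transpose] at h5
    have h6 : (M.det * M.det) * ((Jmat (m+2)).det * (Jmat (m+2)).det)
        = 1 * ((Jmat (m+2)).det * (Jmat (m+2)).det) := by
      linear_combination (Jmat (m+2)).det * h5
    rw [hJdet1, mul_one, mul_one] at h6
    exact h6
  have hdet_or : M.det = 1 ∨ M.det = -1 := mul_self_eq_one_iff.mp hdet2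
  -- column evaluations
  have hcol0 : ∀ p, M p 0 = tv p := by
    intro p
    have : M p 0 = F 0 p := by rw [hM]; rfl
    rw [this, hF0]
  have hcol1 : ∀ p, M p 1 = sv p := by
    intro p
    have : M p 1 = F (0 : Fin (m+2)).succ p := by rw [hM]; rfl
    rw [this, hF1]
  have hM00pos : 0 < M 0 0 := by
    rw [hcol0, htv, Fin.cons_zero]
    positivity
  -- action of M on the two distinguished null directions
  have hMx : M.mulVec ((r/2) • (Pi.single (0 : Fin (m+3)) (1:ℝ) + Pi.single 1 1))
      = tilde (m+2) x := by
    funext p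
    rw [mulVec_smul, Pi.smul_apply, mulVec_add, Pi.add_apply, mulVec_single, mulVec_single]
    simp only [MulOpposite.op_one, one_smul, Matrix.col_apply, mul_one, smul_eq_mul]
    rw [hcol0, hcol1]
    refine Fin.cases ?_ ?_ p
    · rw [htv, hsv, Fin.cons_zero, Fin.cons_zero, tilde, Fin.cons_zero]
      field_simp
      ring
    · intro i
      rw [htv, hsv, Fin.cons_succ, Fin.cons_succ, tilde, Fin.cons_succ]
      field_simp
      ring
  have hMy : M.mulVec ((r/2) • (Pi.single (0 : Fin (m+3)) (1:ℝ) - Pi.single 1 1))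
      = tilde (m+2) y := by
    funext p
    rw [mulVec_smul, Pi.smul_apply, mulVec_sub, Pi.sub_apply, mulVec_single, mulVec_single]
    simp only [MulOpposite.op_one, one_smul, Matrix.col_apply, mul_one, smul_eq_mul]
    rw [hcol0, hcol1]
    refine Fin.cases ?_ ?_ p
    · rw [htv, hsv, Fin.cons_zero, Fin.cons_zero, tilde, Fin.cons_zero]
      field_simp
      ring
    · intro i
      rw [htv, hsv, Fin.cons_succ, Fin.cons_succ, tilde, Fin.cons_succ]
      field_simp
      ring
  rcases hdet_or with hdet1 | hdet1
  · exact build m M hMJ hdet1 hM00pos x y r hr hMx hMy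
  -- det M = -1 : flip the second column, then swap with sig
  · obtain ⟨P, hP⟩ : ∃ P : Matrix (Fin (m+3)) (Fin (m+3)) ℝ,
        P = Matrix.diagonal (fun p => if p = 1 then (-1:ℝ) else 1) := ⟨_, rfl⟩
    have hPdet : P.det = -1 := by
      rw [hP, det_diagonal, Finset.prod_ite_eq']
      simp
    have hPsym : Pᵀ = P := by rw [hP, diagonal_transpose]
    have hPJP : P * Jmat (m+2) * P = Jmat (m+2) := by
      ext p p'
      rw [hP, Jmat, diagonal_mul_diagonal, diagonal_mul_diagonal]
      by_cases hpp : p = p'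
      · subst hpp
        rw [diagonal_apply_eq, diagonal_apply_eq]
        by_cases h1 : p = 1
        · subst h1
          simp [(fin3_zero_ne_one m).symm]
        · simp [h1]
      · rw [diagonal_apply_ne _ hpp, diagonal_apply_ne _ hpp]
    have hNJ : (M*P)ᵀ * Jmat (m+2) * (M*P) = Jmat (m+2) := by
      rw [transpose_mul, hPsym]
      calc P * Mᵀ * Jmat (m+2) * (M * P) = P * (Mᵀ * Jmat (m+2) * M) * P := by
            simp only [Matrix.mul_assoc]
        _ = P * Jmat (m+2) * P := by rw [hMJ]
        _ = Jmat (m+2) := hPJP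
    have hNdet : (M*P).det = 1 := by
      rw [Matrix.det_mul, hdet1, hPdet]
      norm_num
    have hN00 : 0 < (M*P) 0 0 := by
      have : (M*P) 0 0 = M 0 0 * (if (0:Fin (m+3)) = 1 then (-1:ℝ) else 1) := by
        rw [hP, mul_diagonal]
      rw [this, if_neg (fin3_zero_ne_one m)]
      simpa using hM00pos
    -- P swaps the two null directions
    have hPu : P.mulVec ((r/2) • (Pi.single (0 : Fin (m+3)) (1:ℝ) + Pi.single 1 1))
        = (r/2) • (Pi.single (0 : Fin (m+3)) (1:ℝ) - Pi.single 1 1) := by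
      funext p
      rw [hP]
      rw [show (Matrix.diagonal (fun p => if p = 1 then (-1:ℝ) else 1)).mulVec
          (((r/2) • ((Pi.single (0 : Fin (m+3)) (1:ℝ)) + (Pi.single (1 : Fin (m+3)) (1:ℝ)))
            : Fin (m+3) → ℝ)) p
          = (if p = 1 then (-1:ℝ) else 1)
            * ((((r/2) • ((Pi.single (0 : Fin (m+3)) (1:ℝ)) + (Pi.single (1 : Fin (m+3)) (1:ℝ)))
            : Fin (m+3) → ℝ)) p)
          from mulVec_diagonal _ _ _]
      by_cases h1 : p = 1
      · subst h1
        simp [Pi.single_apply, fin3_zero_ne_one m |>.symm]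
      · simp [Pi.single_apply, h1]
    have hPv : P.mulVec ((r/2) • (Pi.single (0 : Fin (m+3)) (1:ℝ) - Pi.single 1 1))
        = (r/2) • (Pi.single (0 : Fin (m+3)) (1:ℝ) + Pi.single 1 1) := by
      funext p
      rw [hP]
      rw [show (Matrix.diagonal (fun p => if p = 1 then (-1:ℝ) else 1)).mulVec
          (((r/2) • ((Pi.single (0 : Fin (m+3)) (1:ℝ)) - (Pi.single (1 : Fin (m+3)) (1:ℝ)))
            : Fin (m+3) → ℝ)) p
          = (if p = 1 then (-1:ℝ) else 1)
            * ((((r/2) • ((Pi.single (0 : Fin (m+3)) (1:ℝ)) - (Pi.single (1 : Fin (m+3)) (1:ℝ)))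
            : Fin (m+3) → ℝ)) p)
          from mulVec_diagonal _ _ _]
      by_cases h1 : p = 1
      · subst h1
        simp [Pi.single_apply, fin3_zero_ne_one m |>.symm]
      · simp [Pi.single_apply, h1]
    have hNx : (M*P).mulVec ((r/2) • (Pi.single (0 : Fin (m+3)) (1:ℝ) + Pi.single 1 1))
        = tilde (m+2) y := by
      rw [← mulVec_mulVec, hPu, hMy]
    have hNy : (M*P).mulVec ((r/2) • (Pi.single (0 : Fin (m+3)) (1:ℝ) - Pi.single 1 1))
        = tilde (m+2) x := by
      rw [← mulVec_mulVec, hPv, hMx]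
    obtain ⟨g0, hg0, hg0y, hg0x⟩ := build m (M*P) hNJ hNdet hN00 y x r hr hNx hNy
    refine ⟨sig m * g0, isLorentz_mul (sig_lorentz m) hg0, ?_, ?_⟩
    · rw [sphAct_mul _ _ _ (mulVec_tilde_ne_zero hg0 hx), hg0x, sphAct_sig_negE]
    · rw [sphAct_mul _ _ _ (mulVec_tilde_ne_zero hg0 hy), hg0y, sphAct_sig_E]

/-- G acts transitively on ordered pairs of distinct points of S. -/
theorem statement7 (n : ℕ) (hn : 2 ≤ n)
    (x y x' y' : EuclideanSpace ℝ (Fin n))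
    (hx : ‖x‖ = 1) (hy : ‖y‖ = 1) (hx' : ‖x'‖ = 1) (hy' : ‖y'‖ = 1)
    (hxy : x ≠ y) (hxy' : x' ≠ y') :
    ∃ g : Matrix (Fin (n+1)) (Fin (n+1)) ℝ,
      IsLorentz n g ∧ sphAct n g x = x' ∧ sphAct n g y = y' := by
  obtain ⟨m, rfl⟩ : ∃ m, n = m + 2 := ⟨n - 2, by omega⟩
  obtain ⟨gs, hgs, hgsx, hgsy⟩ := normalForm m x y hx hy hxy
  obtain ⟨gt, hgt, hgtx, hgty⟩ := normalForm m x' y' hx' hy' hxy'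
  obtain ⟨hgtinv, hinv1, hinv2⟩ := isLorentz_inv hgt
  set gti := Jmat (m+2) * gtᵀ * Jmat (m+2) with hgti
  have hE : sphAct (m+2) gti (EuclideanSpace.single 0 1) = x' := by
    have h1 := sphAct_mul gti gt x' (mulVec_tilde_ne_zero hgt hx')
    rw [hinv1, sphAct_one, hgtx] at h1
    exact h1.symm
  have hnegE : sphAct (m+2) gti (-(EuclideanSpace.single 0 1)) = y' := by
    have h1 := sphAct_mul gti gt y' (mulVec_tilde_ne_zero hgt hy')
    rw [hinv1, sphAct_one, hgty] at h1
    exact h1.symm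
  refine ⟨gti * gs, isLorentz_mul hgtinv hgs, ?_, ?_⟩
  · rw [sphAct_mul _ _ _ (mulVec_tilde_ne_zero hgs hx), hgsx, hE]
  · rw [sphAct_mul _ _ _ (mulVec_tilde_ne_zero hgs hy), hgsy, hnegE]
end
end

section
/- Let λ, ζ ∈ ℂ, t ∈ ℝ, and R ∈ SO(n−1). Let h ∈ G be the matrix with h₀₀ = h₁₁ = cosh t, h₀₁ = h₁₀ = sinh t, lower-right (n−1)×(n−1) block equal to R, and all other entries 0. Define Θ(s) = |𝟏⁺ − s|^{−ρ−λ+ζ} · |𝟏⁻ − s|^{−ρ−λ−ζ} for s ∈ S, s ≠ ±𝟏⁺, where 𝟏⁺ = (1,0,…,0) and 𝟏⁻ = (−1,0,…,0). Then for every s ∈ S with s ≠ ±𝟏⁺: κ(h^{-1}, s)^{ρ+λ} · Θ(h^{-1}(s)) = e^{tζ} · Θ(s). (That is, π_λ(h) Θ_{λ,ζ} = ν_ζ(h) Θ_{λ,ζ} for all h in the stabilizer H of the pair (𝟏⁺, 𝟏⁻).) -/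
open MeasureTheory Matrix

noncomputable section

def onePlus (m : ℕ) : EuclideanSpace ℝ (Fin (m+1)) := EuclideanSpace.single 0 1

def oneMinus (m : ℕ) : EuclideanSpace ℝ (Fin (m+1)) := EuclideanSpace.single 0 (-1)

def hMat (m : ℕ) (t : ℝ) (R : Matrix (Fin m) (Fin m) ℝ) :
    Matrix (Fin (m+1+1)) (Fin (m+1+1)) ℝ :=
  Matrix.reindex (finSumFinEquiv.trans (finCongr (by omega)))
    (finSumFinEquiv.trans (finCongr (by omega)))
    (Matrix.fromBlocks !![Real.cosh t, Real.sinh t; Real.sinh t, Real.cosh t] 0 0 R)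

/- ## Auxiliary lemmas -/

def eqv (m : ℕ) : Fin 2 ⊕ Fin m ≃ Fin (m+1+1) := finSumFinEquiv.trans (finCongr (by omega))

lemma eqv0 (m : ℕ) : eqv m (Sum.inl 0) = 0 := by apply Fin.ext; simp [eqv]
lemma eqv1 (m : ℕ) : eqv m (Sum.inl 1) = 1 := by apply Fin.ext; simp [eqv]
lemma eqv2 (m : ℕ) (j : Fin m) : eqv m (Sum.inr j) = j.succ.succ := by
  apply Fin.ext; simp [eqv, Fin.val_succ]

lemma hMat_eq (m : ℕ) (t : ℝ) (R : Matrix (Fin m) (Fin m) ℝ) :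
    hMat m t R = Matrix.reindex (eqv m) (eqv m)
      (Matrix.fromBlocks !![Real.cosh t, Real.sinh t; Real.sinh t, Real.cosh t] 0 0 R) := rfl

lemma hMat_apply (m : ℕ) (t : ℝ) (R : Matrix (Fin m) (Fin m) ℝ) (x y : Fin 2 ⊕ Fin m) :
    hMat m t R (eqv m x) (eqv m y)
      = Matrix.fromBlocks !![Real.cosh t, Real.sinh t; Real.sinh t, Real.cosh t] 0 0 R x y := by
  simp [hMat_eq, Matrix.reindex_apply]

lemma hMat_mul (m : ℕ) (t t' : ℝ) (R R' : Matrix (Fin m) (Fin m) ℝ) :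
    hMat m t R * hMat m t' R' =
      Matrix.reindex (eqv m) (eqv m)
        (Matrix.fromBlocks
          (!![Real.cosh t, Real.sinh t; Real.sinh t, Real.cosh t] *
           !![Real.cosh t', Real.sinh t'; Real.sinh t', Real.cosh t']) 0 0 (R * R')) := by
  rw [hMat_eq, hMat_eq, Matrix.reindex_apply, Matrix.reindex_apply, Matrix.reindex_apply,
    Matrix.submatrix_mul_equiv _ _ _ (eqv m).symm _, Matrix.fromBlocks_multiply]
  simp

lemma boost_mul_boost_neg (t : ℝ) :
    !![Real.cosh t, Real.sinh t; Real.sinh t, Real.cosh t] *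
      !![Real.cosh (-t), Real.sinh (-t); Real.sinh (-t), Real.cosh (-t)] = 1 := by
  ext i j
  fin_cases i <;> fin_cases j <;>
    simp [Matrix.mul_apply, Fin.sum_univ_two, Real.cosh_neg, Real.sinh_neg, Matrix.one_apply] <;>
    nlinarith [Real.cosh_sq_sub_sinh_sq t]

lemma hMat_inv (m : ℕ) (t : ℝ) (R : Matrix (Fin m) (Fin m) ℝ)
    (hR : R ∈ Matrix.orthogonalGroup (Fin m) ℝ) :
    (hMat m t R)⁻¹ = hMat m (-t) Rᵀ := by
  apply Matrix.inv_eq_right_inv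
  rw [hMat_mul, boost_mul_boost_neg]
  have hRT : R * Rᵀ = 1 := by
    have := (Matrix.mem_orthogonalGroup_iff _ _).1 hR
    simpa [Matrix.star_eq_conjTranspose] using this
  rw [hRT, Matrix.fromBlocks_one, Matrix.reindex_apply, Matrix.submatrix_one_equiv]

lemma sum_split (m : ℕ) (f : Fin (m+1+1) → ℝ) :
    ∑ j, f j = f 0 + f 1 + ∑ j : Fin m, f j.succ.succ := by
  rw [Fin.sum_univ_succ, Fin.sum_univ_succ]
  simp [add_assoc, Fin.succ_zero_eq_one]

lemma hMat00 (m t) (R : Matrix (Fin m) (Fin m) ℝ) : hMat m t R 0 0 = Real.cosh t := by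
  have := hMat_apply m t R (Sum.inl 0) (Sum.inl 0); rw [eqv0] at this; rw [this]; rfl
lemma hMat01 (m t) (R : Matrix (Fin m) (Fin m) ℝ) : hMat m t R 0 1 = Real.sinh t := by
  have := hMat_apply m t R (Sum.inl 0) (Sum.inl 1); rw [eqv0, eqv1] at this; rw [this]; rfl
lemma hMat10 (m t) (R : Matrix (Fin m) (Fin m) ℝ) : hMat m t R 1 0 = Real.sinh t := by
  have := hMat_apply m t R (Sum.inl 1) (Sum.inl 0); rw [eqv0, eqv1] at this; rw [this]; rfl
lemma hMat11 (m t) (R : Matrix (Fin m) (Fin m) ℝ) : hMat m t R 1 1 = Real.cosh t := by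
  have := hMat_apply m t R (Sum.inl 1) (Sum.inl 1); rw [eqv1] at this; rw [this]; rfl
lemma hMat0j (m t) (R : Matrix (Fin m) (Fin m) ℝ) (j : Fin m) : hMat m t R 0 j.succ.succ = 0 := by
  have := hMat_apply m t R (Sum.inl 0) (Sum.inr j); rw [eqv0, eqv2] at this; rw [this]; rfl
lemma hMat1j (m t) (R : Matrix (Fin m) (Fin m) ℝ) (j : Fin m) : hMat m t R 1 j.succ.succ = 0 := by
  have := hMat_apply m t R (Sum.inl 1) (Sum.inr j); rw [eqv1, eqv2] at this; rw [this]; rfl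
lemma hMatj0 (m t) (R : Matrix (Fin m) (Fin m) ℝ) (j : Fin m) : hMat m t R j.succ.succ 0 = 0 := by
  have := hMat_apply m t R (Sum.inr j) (Sum.inl 0); rw [eqv0, eqv2] at this; rw [this]; rfl
lemma hMatj1 (m t) (R : Matrix (Fin m) (Fin m) ℝ) (j : Fin m) : hMat m t R j.succ.succ 1 = 0 := by
  have := hMat_apply m t R (Sum.inr j) (Sum.inl 1); rw [eqv1, eqv2] at this; rw [this]; rfl
lemma hMatij (m t) (R : Matrix (Fin m) (Fin m) ℝ) (i j : Fin m) :
    hMat m t R i.succ.succ j.succ.succ = R i j := by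
  have := hMat_apply m t R (Sum.inr i) (Sum.inr j); rw [eqv2, eqv2] at this; rw [this]; rfl

lemma hMat_mulVec (m : ℕ) (t : ℝ) (R : Matrix (Fin m) (Fin m) ℝ) (v : Fin (m+1+1) → ℝ) :
    (hMat m t R).mulVec v =
      Fin.cons (Real.cosh t * v 0 + Real.sinh t * v 1)
        (Fin.cons (Real.sinh t * v 0 + Real.cosh t * v 1)
          (R.mulVec (fun j => v j.succ.succ))) := by
  funext k
  induction k using Fin.cases with
  | zero =>
      rw [Fin.cons_zero]
      rw [Matrix.mulVec, dotProduct, sum_split]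
      simp [hMat00, hMat01, hMat0j]
  | succ k =>
      rw [Fin.cons_succ]
      induction k using Fin.cases with
      | zero =>
          rw [Fin.cons_zero, Fin.succ_zero_eq_one]
          rw [Matrix.mulVec, dotProduct, sum_split]
          simp [hMat10, hMat11, hMat1j]
      | succ k =>
          rw [Fin.cons_succ]
          rw [Matrix.mulVec, dotProduct, sum_split]
          simp [hMatj0, hMatj1, hMatij, Matrix.mulVec, dotProduct]

lemma tilde0' (n : ℕ) (x : EuclideanSpace ℝ (Fin n)) : tilde n x 0 = 1 := rfl
lemma tilde1' (n : ℕ) (x : EuclideanSpace ℝ (Fin (n+1))) : tilde (n+1) x 1 = x 0 := by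
  rw [show (1 : Fin (n+1+1)) = (0 : Fin (n+1)).succ from rfl]
  simp [tilde]
lemma tildej' (n : ℕ) (x : EuclideanSpace ℝ (Fin (n+1))) (j : Fin n) :
    tilde (n+1) x j.succ.succ = x j.succ := by simp [tilde]

lemma orth_sum_sq (m : ℕ) (M : Matrix (Fin m) (Fin m) ℝ) (hM : Mᵀ * M = 1) (w : Fin m → ℝ) :
    ∑ i, (M.mulVec w i)^2 = ∑ i, (w i)^2 := by
  have h1 : ∑ i, (M.mulVec w i)^2 = (M.mulVec w) ⬝ᵥ (M.mulVec w) := by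
    simp [dotProduct, sq]
  have h2 : (M.mulVec w) ⬝ᵥ (M.mulVec w) = ((M.mulVec w) ᵥ* M) ⬝ᵥ w :=
    Matrix.dotProduct_mulVec _ _ _
  have h3 : (M.mulVec w) ᵥ* M = w := by
    rw [← Matrix.mulVec_transpose, Matrix.mulVec_mulVec, hM, Matrix.one_mulVec]
  rw [h1, h2, h3]
  simp [dotProduct, sq]

lemma norm_sq_eq' (m : ℕ) (x : EuclideanSpace ℝ (Fin m)) : ‖x‖^2 = ∑ i, (x i)^2 := by
  rw [EuclideanSpace.norm_eq, Real.sq_sqrt (by positivity)]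
  simp [sq_abs]

lemma norm_sub_single_sq (m : ℕ) (c : ℝ) (x : EuclideanSpace ℝ (Fin (m+1))) (hx : ‖x‖ = 1) :
    ‖EuclideanSpace.single (0 : Fin (m+1)) c - x‖^2 = c^2 - 2*c*(x 0) + 1 := by
  rw [norm_sub_sq_real, EuclideanSpace.norm_single, EuclideanSpace.inner_single_left, hx]
  simp [Real.norm_eq_abs, sq_abs]
  ring

lemma cpowR (x : ℝ) (hx : 0 < x) (w : ℂ) :
    (x:ℂ)^w = Complex.exp ((Real.log x : ℂ) * w) := by
  rw [Complex.cpow_def_of_ne_zero (by exact_mod_cast hx.ne'), Complex.ofReal_log hx.le]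

/-- the covariance π_λ(h) Θ_{λ,ζ} = ν_ζ(h) Θ_{λ,ζ} for h in the stabilizer
H of (𝟏⁺, 𝟏⁻), where Θ_{λ,ζ}(s) = |𝟏⁺−s|^{−ρ−λ+ζ}|𝟏⁻−s|^{−ρ−λ−ζ} and ρ = (n−1)/2 = m/2. -/
theorem statement16 (m : ℕ) (hm : 1 ≤ m) (lam zeta : ℂ) (t : ℝ)
    (R : Matrix (Fin m) (Fin m) ℝ)
    (hR : R ∈ Matrix.orthogonalGroup (Fin m) ℝ) (hRdet : R.det = 1)
    (s : EuclideanSpace ℝ (Fin (m+1))) (hs : ‖s‖ = 1)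
    (hs1 : s ≠ onePlus m) (hs2 : s ≠ oneMinus m) :
    (kappa (m+1) (hMat m t R)⁻¹ s : ℂ) ^ ((m : ℂ) / 2 + lam) *
        ((‖onePlus m - sphAct (m+1) (hMat m t R)⁻¹ s‖ : ℂ) ^ (-((m : ℂ) / 2) - lam + zeta) *
          (‖oneMinus m - sphAct (m+1) (hMat m t R)⁻¹ s‖ : ℂ) ^ (-((m : ℂ) / 2) - lam - zeta))
      = Complex.exp ((t : ℂ) * zeta) *
          ((‖onePlus m - s‖ : ℂ) ^ (-((m : ℂ) / 2) - lam + zeta) *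
            (‖oneMinus m - s‖ : ℂ) ^ (-((m : ℂ) / 2) - lam - zeta)) := by
  have hRR : R * Rᵀ = 1 := by
    have := (Matrix.mem_orthogonalGroup_iff _ _).1 hR
    simpa [Matrix.star_eq_conjTranspose] using this
  have hginv : (hMat m t R)⁻¹ = hMat m (-t) Rᵀ := hMat_inv m t R hR
  set g : Matrix (Fin (m+1+1)) (Fin (m+1+1)) ℝ := hMat m (-t) Rᵀ with hg
  set v : Fin (m+1+1) → ℝ := tilde (m+1) s with hv
  have hmv := hMat_mulVec m (-t) Rᵀ v
  have hmv0 : g.mulVec v 0 = Real.cosh t - Real.sinh t * s 0 := by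
    rw [hmv]
    rw [Fin.cons_zero, show v 0 = 1 from rfl, show v 1 = s 0 from tilde1' m s,
      Real.cosh_neg, Real.sinh_neg]
    try ring
  have hmv1 : g.mulVec v 1 = Real.cosh t * s 0 - Real.sinh t := by
    rw [hmv, show (1 : Fin (m+1+1)) = (0 : Fin (m+1)).succ from rfl, Fin.cons_succ, Fin.cons_zero]
    rw [show v 0 = 1 from rfl, show v ((0 : Fin (m+1)).succ) = s 0 from tilde1' m s,
      Real.cosh_neg, Real.sinh_neg]
    try ring
  have hmvj : ∀ j : Fin m, g.mulVec v j.succ.succ = Rᵀ.mulVec (fun i => s i.succ) j := by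
    intro j
    have hfun : (fun j : Fin m => v j.succ.succ) = (fun i : Fin m => s i.succ) :=
      funext (fun i => tildej' m s i)
    rw [hmv, Fin.cons_succ, Fin.cons_succ, hfun]
  set a : ℝ := Real.cosh t - Real.sinh t * s 0 with ha
  have hsum : ∑ i, (s i)^2 = 1 := by
    have := norm_sq_eq' (m+1) s; rw [hs] at this; simpa using this.symm
  have hs0sq : (s 0)^2 ≤ 1 := by
    rw [← hsum]
    exact Finset.single_le_sum (f := fun i => (s i)^2) (fun i _ => sq_nonneg _) (Finset.mem_univ 0)
  have hs0abs : |s 0| ≤ 1 := by nlinarith [abs_nonneg (s 0), sq_abs (s 0)]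
  have ha_pos : 0 < a := by
    have h2 : Real.sinh t * s 0 ≤ |Real.sinh t| := by
      calc Real.sinh t * s 0 ≤ |Real.sinh t * s 0| := le_abs_self _
      _ = |Real.sinh t| * |s 0| := abs_mul _ _
      _ ≤ |Real.sinh t| * 1 := mul_le_mul_of_nonneg_left hs0abs (abs_nonneg _)
      _ = |Real.sinh t| := mul_one _
    have h3 : |Real.sinh t| < Real.cosh t := by
      rw [Real.abs_sinh, ← Real.cosh_abs t]
      nlinarith [Real.cosh_sub_sinh |t|, Real.exp_pos (-|t|)]
    rw [ha]; linarith
  -- kappa value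
  have hkappa : kappa (m+1) (hMat m t R)⁻¹ s = a⁻¹ := by
    rw [hginv]; unfold kappa; rw [← hv, hmv0]
  -- the transformed point
  set u : EuclideanSpace ℝ (Fin (m+1)) := sphAct (m+1) g s with hu
  have hu0 : u 0 = (Real.cosh t * s 0 - Real.sinh t) / a := by
    show g.mulVec (tilde (m+1) s) (0:Fin (m+1)).succ / g.mulVec (tilde (m+1) s) 0
      = (Real.cosh t * s 0 - Real.sinh t) / a
    rw [← hv, Fin.succ_zero_eq_one, hmv0, hmv1]
  have huj : ∀ j : Fin m, u j.succ = Rᵀ.mulVec (fun i => s i.succ) j / a := by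
    intro j
    show g.mulVec (tilde (m+1) s) j.succ.succ / g.mulVec (tilde (m+1) s) 0 = _
    rw [← hv, hmvj, hmv0]
  -- norm of u is 1
  have hssum' : ∑ j : Fin m, (s j.succ)^2 = 1 - (s 0)^2 := by
    have := hsum
    rw [Fin.sum_univ_succ] at this
    linarith
  have horth : ∑ j : Fin m, (Rᵀ.mulVec (fun i => s i.succ) j)^2 = 1 - (s 0)^2 := by
    rw [orth_sum_sq m Rᵀ (by rwa [Matrix.transpose_transpose]) _, hssum']
  have husum : ∑ i, (u i)^2 = 1 := by
    rw [Fin.sum_univ_succ, hu0]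
    have : ∀ j : Fin m, (u j.succ)^2 = (Rᵀ.mulVec (fun i => s i.succ) j)^2 / a^2 := by
      intro j; rw [huj j, div_pow]
    rw [Finset.sum_congr rfl (fun j _ => this j), ← Finset.sum_div, horth, div_pow]
    have hch := Real.cosh_sq_sub_sinh_sq t
    field_simp
    rw [ha]
    nlinarith [hch]
  have hunorm : ‖u‖ = 1 := by
    rw [EuclideanSpace.norm_eq]
    simp only [Real.norm_eq_abs, sq_abs]
    rw [husum, Real.sqrt_one]
  -- squared norm identities
  have hN1sq : ‖onePlus m - s‖^2 = 2*(1 - s 0) := by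
    rw [onePlus, norm_sub_single_sq m 1 s hs]; ring
  have hN2sq : ‖oneMinus m - s‖^2 = 2*(1 + s 0) := by
    rw [oneMinus, norm_sub_single_sq m (-1) s hs]; ring
  have hU1sq : ‖onePlus m - u‖^2 = 2*(1 - u 0) := by
    rw [onePlus, norm_sub_single_sq m 1 u hunorm]; ring
  have hU2sq : ‖oneMinus m - u‖^2 = 2*(1 + u 0) := by
    rw [oneMinus, norm_sub_single_sq m (-1) u hunorm]; ring
  have ha0 : a ≠ 0 := ha_pos.ne'
  have hU1sq' : ‖onePlus m - u‖^2 = (Real.exp t / a) * ‖onePlus m - s‖^2 := by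
    rw [hU1sq, hN1sq, hu0]
    field_simp
    rw [show Real.exp t = Real.cosh t + Real.sinh t from (Real.cosh_add_sinh t).symm]
    ring
  have hU2sq' : ‖oneMinus m - u‖^2 = (Real.exp (-t) / a) * ‖oneMinus m - s‖^2 := by
    rw [hU2sq, hN2sq, hu0]
    field_simp
    rw [show Real.exp (-t) = Real.cosh t - Real.sinh t from (Real.cosh_sub_sinh t).symm]
    ring
  -- norms themselves
  have hq1pos : 0 < Real.exp t / a := div_pos (Real.exp_pos t) ha_pos
  have hq2pos : 0 < Real.exp (-t) / a := div_pos (Real.exp_pos (-t)) ha_pos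
  have hU1 : ‖onePlus m - u‖ = Real.sqrt (Real.exp t / a) * ‖onePlus m - s‖ := by
    have h := congrArg Real.sqrt hU1sq'
    rwa [Real.sqrt_sq (norm_nonneg _), Real.sqrt_mul hq1pos.le, Real.sqrt_sq (norm_nonneg _)] at h
  have hU2 : ‖oneMinus m - u‖ = Real.sqrt (Real.exp (-t) / a) * ‖oneMinus m - s‖ := by
    have h := congrArg Real.sqrt hU2sq'
    rwa [Real.sqrt_sq (norm_nonneg _), Real.sqrt_mul hq2pos.le, Real.sqrt_sq (norm_nonneg _)] at h
  -- positivity of norms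
  have hN1pos : 0 < ‖onePlus m - s‖ := by
    rw [norm_pos_iff]; exact sub_ne_zero.mpr (Ne.symm hs1)
  have hN2pos : 0 < ‖oneMinus m - s‖ := by
    rw [norm_pos_iff]; exact sub_ne_zero.mpr (Ne.symm hs2)
  -- final computation
  rw [hkappa, hginv, ← hu, hU1, hU2]
  have hainv : (0:ℝ) < a⁻¹ := inv_pos.mpr ha_pos
  rw [cpowR _ hainv, cpowR _ (mul_pos (Real.sqrt_pos.mpr hq1pos) hN1pos),
    cpowR _ (mul_pos (Real.sqrt_pos.mpr hq2pos) hN2pos), cpowR _ hN1pos, cpowR _ hN2pos]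
  rw [Real.log_inv, Real.log_mul (Real.sqrt_pos.mpr hq1pos).ne' hN1pos.ne',
    Real.log_mul (Real.sqrt_pos.mpr hq2pos).ne' hN2pos.ne',
    Real.log_sqrt hq1pos.le, Real.log_sqrt hq2pos.le,
    Real.log_div (Real.exp_pos t).ne' ha0, Real.log_div (Real.exp_pos (-t)).ne' ha0,
    Real.log_exp, Real.log_exp]
  rw [← Complex.exp_add, ← Complex.exp_add, ← Complex.exp_add, ← Complex.exp_add]
  congr 1
  push_cast
  ring
end
end

section
/- Let σ, τ ∈ ℂ and f : S × S → ℂ. For g ∈ G define (P_{σ,τ} f)(g) = κ(g, 𝟏⁺)^{ρ+σ} κ(g, 𝟏⁻)^{ρ+τ} f(g(𝟏⁺), g(𝟏⁻)). Let t ∈ ℝ, R ∈ SO(n−1), and let h ∈ G be the matrix with h₀₀ = h₁₁ = cosh t, h₀₁ = h₁₀ = sinh t, lower-right block R, zeros elsewhere. Then for every g ∈ G: (P_{σ,τ} f)(g h) = e^{−t(σ−τ)} · (P_{σ,τ} f)(g). -/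
open MeasureTheory Matrix

noncomputable section

/-- (P_{σ,τ} f)(g) = κ(g,𝟏⁺)^{ρ+σ} κ(g,𝟏⁻)^{ρ+τ} f(g(𝟏⁺), g(𝟏⁻)), with ρ = m/2. -/
def Pst (m : ℕ) (sig tau : ℂ)
    (f : EuclideanSpace ℝ (Fin (m+1)) × EuclideanSpace ℝ (Fin (m+1)) → ℂ)
    (g : Matrix (Fin (m+1+1)) (Fin (m+1+1)) ℝ) : ℂ :=
  (kappa (m+1) g (onePlus m) : ℂ) ^ ((m : ℂ) / 2 + sig) *
    (kappa (m+1) g (oneMinus m) : ℂ) ^ ((m : ℂ) / 2 + tau) *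
    f (sphAct (m+1) g (onePlus m), sphAct (m+1) g (oneMinus m))


def Jv (n : ℕ) : Fin (n+1) → ℝ := Fin.cons 1 fun _ => -1

lemma Jv_sq (n : ℕ) (j : Fin (n+1)) : Jv n j * Jv n j = 1 := by
  induction j using Fin.cases <;> simp [Jv]

lemma lform_eq (n : ℕ) (x y : Fin (n+1) → ℝ) :
    lform n x y = ∑ j, x j * (Jv n j * y j) := by
  rw [Fin.sum_univ_succ]
  simp [lform, Jv, sub_eq_add_neg, mul_neg, mul_one]

lemma row_identity (n : ℕ) (g : Matrix (Fin (n+1)) (Fin (n+1)) ℝ)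
    (hg : IsLorentz n g) (k : Fin (n+1)) :
    g k 0 ^ 2 - ∑ i : Fin n, g k i.succ ^ 2 = Jv n k := by
  classical
  set D : Matrix (Fin (n+1)) (Fin (n+1)) ℝ := Matrix.diagonal (Jv n) with hD
  have hDD : D * D = 1 := by
    ext a b
    simp only [hD, Matrix.diagonal_mul_diagonal, Matrix.diagonal_apply, Matrix.one_apply]
    split_ifs with hab
    · subst hab; exact Jv_sq n a
    · rfl
  have hcol : gᵀ * D * g = D := by
    ext a b
    have h := hg.1 (Pi.single a 1) (Pi.single b 1)
    rw [lform_eq, lform_eq] at h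
    have l1 : (gᵀ * D * g) a b = ∑ j, g j a * (Jv n j * g j b) := by
      simp [hD, Matrix.mul_apply, Matrix.diagonal, Matrix.transpose_apply,
        Finset.mul_sum, Finset.sum_ite_eq, mul_assoc]
    rw [l1]
    have l2 : ∀ j, g.mulVec (Pi.single a 1) j = g j a := by
      intro j; simp [Matrix.mulVec_single]
    have l3 : ∀ j, g.mulVec (Pi.single b 1) j = g j b := by
      intro j; simp [Matrix.mulVec_single]
    simp only [l2, l3] at h
    rw [h]
    simp [hD, Matrix.diagonal_apply, Pi.single_apply]
    by_cases hab : a = b <;> simp [hab]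
    · exact fun hba => absurd hba.symm hab
  have hleft : (D * gᵀ * D) * g = 1 := by
    rw [mul_assoc, mul_assoc, ← mul_assoc gᵀ, hcol, hDD]
  have hright : g * (D * gᵀ * D) = 1 := mul_eq_one_comm.mp hleft
  have hrow : g * D * gᵀ = D := by
    have h1 : g * (D * gᵀ * D) * D = D := by rw [hright, one_mul]
    calc g * D * gᵀ = g * D * gᵀ * (D * D) := by rw [hDD, mul_one]
      _ = g * (D * gᵀ * D) * D := by noncomm_ring
      _ = D := h1
  have := congrFun (congrFun hrow k) k
  have l4 : (g * D * gᵀ) k k = ∑ j, g k j * (Jv n j * g k j) := by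
    simp [hD, Matrix.mul_apply, Matrix.diagonal, Matrix.transpose_apply,
      Finset.sum_ite_eq, mul_assoc]
  rw [l4, Fin.sum_univ_succ] at this
  simp only [Jv, Fin.cons_zero, Fin.cons_succ, one_mul, neg_mul, mul_neg,
    Finset.sum_neg_distrib, Matrix.diagonal_apply_eq, hD] at this
  simp only [Jv, pow_two]
  linarith [this]

lemma pos_entry (m : ℕ) (g : Matrix (Fin (m+1+1)) (Fin (m+1+1)) ℝ)
    (hg : IsLorentz (m+1) g) (c : ℝ) (hc : c = 1 ∨ c = -1) :
    0 < g 0 0 + g 0 1 * c := by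
  have h := row_identity (m+1) g hg 0
  simp only [Jv, Fin.cons_zero] at h
  have hsq : g 0 1 ^ 2 ≤ ∑ i : Fin (m+1), g 0 i.succ ^ 2 := by
    have := Finset.single_le_sum (f := fun i : Fin (m+1) => g 0 i.succ ^ 2)
      (fun i _ => sq_nonneg _) (Finset.mem_univ (0 : Fin (m+1)))
    simpa [Fin.succ_zero_eq_one] using this
  have h00 := hg.2.2
  rcases hc with rfl | rfl <;> nlinarith [sq_nonneg (g 0 0 + g 0 1), sq_nonneg (g 0 0 - g 0 1)]

lemma tilde_single (m : ℕ) (c : ℝ) :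
    tilde (m+1) (EuclideanSpace.single 0 c) = Fin.cons 1 (Fin.cons c 0) := by
  funext k
  induction k using Fin.cases with
  | zero => rfl
  | succ i =>
    induction i using Fin.cases with
    | zero => simp [tilde, EuclideanSpace.single_apply]
    | succ j => simp [tilde, EuclideanSpace.single_apply, (Fin.succ_ne_zero j)]

lemma cons_cons_apply_two (m : ℕ) (a b : ℝ) (k : Fin (m+1+1)) (hk : 2 ≤ (k : ℕ)) :
    (Fin.cons a (Fin.cons b (fun _ => (0:ℝ))) : Fin (m+1+1) → ℝ) k = 0 := by
  induction k using Fin.cases with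
  | zero => simp at hk
  | succ i =>
    induction i using Fin.cases with
    | zero => simp at hk
    | succ j => simp

lemma hMat_mulVec_s17 (m : ℕ) (t : ℝ) (R : Matrix (Fin m) (Fin m) ℝ) (c : ℝ)
    (hc : c = 1 ∨ c = -1) :
    (hMat m t R).mulVec (tilde (m+1) (EuclideanSpace.single 0 c))
      = Real.exp (c * t) • tilde (m+1) (EuclideanSpace.single 0 c) := by
  set v := tilde (m+1) (EuclideanSpace.single (0 : Fin (m+1)) c) with hv
  set e : (Fin 2 ⊕ Fin m) ≃ Fin (m+1+1) :=
    (finSumFinEquiv.trans (finCongr (by omega))) with he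
  set A : Matrix (Fin 2) (Fin 2) ℝ := !![Real.cosh t, Real.sinh t; Real.sinh t, Real.cosh t]
    with hA
  have e0 : e (Sum.inl 0) = (0 : Fin (m+1+1)) := by
    apply Fin.ext; simp [he, finCongr_apply]
  have e1 : e (Sum.inl 1) = (1 : Fin (m+1+1)) := by
    apply Fin.ext; simp [he, finCongr_apply]
  have htt : tilde (m+1) (EuclideanSpace.single (0 : Fin (m+1)) c)
      = (Fin.cons 1 (Fin.cons c (fun _ => (0:ℝ))) : Fin (m+1+1) → ℝ) := by
    rw [tilde_single]; rfl
  have hcomp : v ∘ e = Sum.elim ![1, c] 0 := by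
    funext s
    rcases s with i | j
    · show v (e (Sum.inl i)) = ![1, c] i
      induction i using Fin.cases with
      | zero => rw [e0, hv, htt]; simp
      | succ j =>
        rw [Subsingleton.elim j 0, Fin.succ_zero_eq_one, e1, hv, htt]
        rw [show (1 : Fin (m+1+1)) = Fin.succ 0 from (Fin.succ_zero_eq_one).symm]
        simp
    · show v (e (Sum.inr j)) = 0
      rw [hv, htt]
      apply cons_cons_apply_two
      simp [he, finCongr_apply, finSumFinEquiv_apply_right]
  have key : (hMat m t R).mulVec v
      = ((Matrix.fromBlocks A 0 0 R).mulVec (v ∘ e)) ∘ e.symm := by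
    rw [hMat, Matrix.reindex_apply]
    rw [Matrix.submatrix_mulVec_equiv]
    simp [he, hA]
  rw [key, hcomp, Matrix.fromBlocks_mulVec]
  simp only [Sum.elim_comp_inl, Sum.elim_comp_inr, Matrix.zero_mulVec,
    Matrix.mulVec_zero, add_zero, zero_add]
  have hAv : A.mulVec ![1, c] = Real.exp (c * t) • ![1, c] := by
    funext i
    fin_cases i <;>
      · simp [hA, Matrix.mulVec, dotProduct, Fin.sum_univ_two]
        rcases hc with rfl | rfl <;>
          simp [Real.cosh_add_sinh, Real.sinh_add_cosh, one_mul] <;>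
          nlinarith [Real.cosh_sub_sinh t, Real.sinh_sub_cosh t]
  rw [hAv]
  funext k
  have hc2 := congrFun hcomp (e.symm k)
  simp only [Function.comp_apply, Equiv.apply_symm_apply] at hc2
  simp only [Function.comp_apply, Pi.smul_apply]
  rcases hs : e.symm k with i | j
  · rw [hs] at hc2
    fin_cases i <;> simp_all
  · rw [hs] at hc2
    simp_all

lemma mulVec_tilde_zero (m : ℕ) (g : Matrix (Fin (m+1+1)) (Fin (m+1+1)) ℝ) (c : ℝ) :
    g.mulVec (tilde (m+1) (EuclideanSpace.single 0 c)) 0 = g 0 0 + g 0 1 * c := by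
  rw [tilde_single]
  simp [Matrix.mulVec, dotProduct, Fin.sum_univ_succ, Fin.succ_zero_eq_one]

lemma exp_cpow (s : ℝ) (w : ℂ) :
    ((Real.exp s : ℝ) : ℂ) ^ w = Complex.exp (s * w) := by
  rw [Complex.ofReal_exp, Complex.cpow_def_of_ne_zero (Complex.exp_ne_zero _),
    Complex.log_exp (by simp; linarith [Real.pi_pos]) (by simp [Real.pi_nonneg])]



/-- (P_{σ,τ} f)(g h) = e^{−t(σ−τ)} (P_{σ,τ} f)(g) for h ∈ H the element
with boost parameter t and rotation block R ∈ SO(n−1) (here n = m+1). -/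

theorem statement17 (m : ℕ) (hm : 1 ≤ m) (sig tau : ℂ)
    (f : EuclideanSpace ℝ (Fin (m+1)) × EuclideanSpace ℝ (Fin (m+1)) → ℂ)
    (t : ℝ) (R : Matrix (Fin m) (Fin m) ℝ)
    (hR : R ∈ Matrix.orthogonalGroup (Fin m) ℝ) (hRdet : R.det = 1)
    (g : Matrix (Fin (m+1+1)) (Fin (m+1+1)) ℝ) (hg : IsLorentz (m+1) g) :
    Pst m sig tau f (g * hMat m t R)
      = Complex.exp (-(t : ℂ) * (sig - tau)) * Pst m sig tau f g := by
  have hgh : ∀ c : ℝ, c = 1 ∨ c = -1 →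
      (g * hMat m t R).mulVec (tilde (m+1) (EuclideanSpace.single 0 c))
        = Real.exp (c * t) • g.mulVec (tilde (m+1) (EuclideanSpace.single 0 c)) := by
    intro c hc
    rw [← Matrix.mulVec_mulVec, hMat_mulVec_s17 m t R c hc, Matrix.mulVec_smul]
  have hpos : ∀ c : ℝ, c = 1 ∨ c = -1 →
      0 < g.mulVec (tilde (m+1) (EuclideanSpace.single 0 c)) 0 := by
    intro c hc
    rw [mulVec_tilde_zero]
    exact pos_entry m g hg c hc
  have hp : onePlus m = EuclideanSpace.single 0 1 := rfl
  have hq : oneMinus m = EuclideanSpace.single 0 (-1) := rfl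
  have h1 : (1:ℝ) = 1 ∨ (1:ℝ) = -1 := Or.inl rfl
  have h2 : (-1:ℝ) = 1 ∨ (-1:ℝ) = -1 := Or.inr rfl
  have hk1 : kappa (m+1) (g * hMat m t R) (onePlus m)
      = Real.exp (-t) * kappa (m+1) g (onePlus m) := by
    rw [kappa, kappa, hp, hgh 1 h1]
    simp [mul_inv, Real.exp_neg, mul_comm]
  have hk2 : kappa (m+1) (g * hMat m t R) (oneMinus m)
      = Real.exp t * kappa (m+1) g (oneMinus m) := by
    rw [kappa, kappa, hq, hgh (-1) h2]
    simp [mul_inv, Real.exp_neg, mul_comm]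
  have hs1 : sphAct (m+1) (g * hMat m t R) (onePlus m) = sphAct (m+1) g (onePlus m) := by
    ext i
    rw [sphAct, sphAct, hp, hgh 1 h1]
    simp only [PiLp.toLp_apply, Pi.smul_apply, smul_eq_mul]
    exact mul_div_mul_left _ _ (Real.exp_ne_zero _)
  have hs2 : sphAct (m+1) (g * hMat m t R) (oneMinus m) = sphAct (m+1) g (oneMinus m) := by
    ext i
    rw [sphAct, sphAct, hq, hgh (-1) h2]
    simp only [PiLp.toLp_apply, Pi.smul_apply, smul_eq_mul]
    exact mul_div_mul_left _ _ (Real.exp_ne_zero _)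
  have hknn1 : (0:ℝ) ≤ kappa (m+1) g (onePlus m) :=
    inv_nonneg.mpr (hpos 1 h1).le
  have hknn2 : (0:ℝ) ≤ kappa (m+1) g (oneMinus m) :=
    inv_nonneg.mpr (hpos (-1) h2).le
  rw [Pst, Pst, hk1, hk2, hs1, hs2]
  rw [Complex.ofReal_mul, Complex.ofReal_mul,
    Complex.mul_cpow_ofReal_nonneg (Real.exp_nonneg _) hknn1,
    Complex.mul_cpow_ofReal_nonneg (Real.exp_nonneg _) hknn2,
    exp_cpow, exp_cpow]
  have hE : Complex.exp (((-t : ℝ) : ℂ) * ((m:ℂ)/2 + sig))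
        * Complex.exp (((t : ℝ) : ℂ) * ((m:ℂ)/2 + tau))
      = Complex.exp (-(t:ℂ) * (sig - tau)) := by
    rw [← Complex.exp_add]
    congr 1
    push_cast
    ring
  rw [← hE]
  ring
end
end
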